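/- arXiv:2305.03116 — 4 statements merged into one kernel-verified Lean document; each statement's English description precedes it below -/
import Mathlib

section
/- (Calderón transference, strong type) For every map O admitting the approximation properties below, every nontrivial σ-finite system X with d commuting invertible measure-preserving transformations, every family P of integer-valued polynomials, and every Hölder tuple p, the best strong-type constant on X is dominated by that on the canonical system: C_O^P(X, p, s) ≤ C_O^P(X_d, p, s). -/
open MeasureTheory ENNReal NNReal Filter

set_option maxHeartbeats 1000000

noncomputable section

variable {X : Type*} [MeasurableSpace X]

/-- The composite transformation `T₁^{P_{1,j}(n)} ⋯ T_d^{P_{d,j}(n)}`. -/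
def compT {d m k : ℕ} (T : Fin d → Equiv.Perm X)
    (P : Fin d → Fin m → MvPolynomial (Fin k) ℤ) (j : Fin m) (n : Fin k → ℤ) :
    Equiv.Perm X :=
  (List.ofFn fun i : Fin d => T i ^ MvPolynomial.eval n (P i j)).prod

/-- The multilinear polynomial average
`A_N^P f(x) = N^{-k} Σ_{n ∈ {1,…,N}^k} Π_j f_j(T₁^{P_{1,j}(n)} ⋯ T_d^{P_{d,j}(n)} x)`. -/
def polyAvg {d m k : ℕ} (T : Fin d → Equiv.Perm X)
    (P : Fin d → Fin m → MvPolynomial (Fin k) ℤ) (f : Fin m → X → ℝ)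
    (N : ℕ) (x : X) : ℝ :=
  (∑ n ∈ Fintype.piFinset fun _ : Fin k => Finset.Icc (1 : ℤ) (N : ℤ),
      ∏ j : Fin m, f j ((compT T P j n) x)) / (N : ℝ) ^ k

/-- The best constant `C_O^P(X, p, s)` in the strong type inequality
`‖O(A_N^P f : N ∈ ℕ)‖_{p₀} ≤ C Π_j ‖f_j‖_{p_j}`. -/
def strongConstO {d m k : ℕ} (μ : Measure X) (T : Fin d → Equiv.Perm X)
    (P : Fin d → Fin m → MvPolynomial (Fin k) ℤ)
    (O : (ℕ → ℝ) → ℝ≥0∞) (p : Fin (m + 1) → ℝ) : ℝ≥0∞ :=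
  sInf {C | ∀ f : Fin m → X → ℝ,
    (∀ j : Fin m, MemLp (f j) (ENNReal.ofReal (p j.succ)) μ) →
    (∫⁻ x, O (fun N => polyAvg T P f (N + 1) x) ^ p 0 ∂μ) ^ (1 / p 0) ≤
      C * ∏ j : Fin m, eLpNorm (f j) (ENNReal.ofReal (p j.succ)) μ}

/-- The best constant `C_O^P(X, p, w)` in the weak type inequality
`‖O(A_N^P f : N ∈ ℕ)‖_{p₀,∞} ≤ C Π_j ‖f_j‖_{p_j}`, where
`‖g‖_{p₀,∞} = sup_{λ>0} λ μ({x : |g(x)| ≥ λ})^{1/p₀}`. -/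
def weakConstO {d m k : ℕ} (μ : Measure X) (T : Fin d → Equiv.Perm X)
    (P : Fin d → Fin m → MvPolynomial (Fin k) ℤ)
    (O : (ℕ → ℝ) → ℝ≥0∞) (p : Fin (m + 1) → ℝ) : ℝ≥0∞ :=
  sInf {C | ∀ f : Fin m → X → ℝ,
    (∀ j : Fin m, MemLp (f j) (ENNReal.ofReal (p j.succ)) μ) →
    ∀ l : ℝ≥0∞, l * μ {x | l ≤ O fun N => polyAvg T P f (N + 1) x} ^ (1 / p 0) ≤
      C * ∏ j : Fin m, eLpNorm (f j) (ENNReal.ofReal (p j.succ)) μ}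

/-- The shifts `T_{d,i}(l) = l + e_i` of the canonical system `X_d = ℤ^d`. -/
def canShift (d : ℕ) (i : Fin d) : Equiv.Perm (Fin d → ℤ) :=
  Equiv.addRight (Pi.single i 1)

/-! ### Auxiliary lemmas for the transference argument -/

section PermAux
variable {μ : Measure X}

lemma perm_pow_mp (e : Equiv.Perm X) (h : MeasurePreserving (⇑e) μ μ) (n : ℕ) :
    MeasurePreserving (⇑(e ^ n)) μ μ := by
  induction n with
  | zero => simpa using MeasurePreserving.id μ
  | succ n ih =>
    rw [pow_succ]
    have : ⇑(e ^ n * e) = ⇑(e ^ n) ∘ ⇑e := by ext x; simp [Equiv.Perm.mul_apply]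
    rw [this]; exact ih.comp h

lemma perm_inv_pow_meas (e : Equiv.Perm X) (hs : Measurable (⇑e.symm)) (n : ℕ) :
    Measurable (⇑(e⁻¹ ^ n)) := by
  induction n with
  | zero => simpa using measurable_id
  | succ n ih =>
    rw [pow_succ]
    have : ⇑(e⁻¹ ^ n * e⁻¹) = ⇑(e⁻¹ ^ n) ∘ ⇑(e⁻¹) := by ext x; simp [Equiv.Perm.mul_apply]
    rw [this]
    exact ih.comp (by simpa [Equiv.Perm.inv_def] using hs)

lemma perm_zpow_mp (e : Equiv.Perm X) (h : MeasurePreserving (⇑e) μ μ)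
    (hs : Measurable (⇑e.symm)) (z : ℤ) : MeasurePreserving (⇑(e ^ z)) μ μ := by
  cases z with
  | ofNat n => simpa using perm_pow_mp e h n
  | negSucc n =>
    rw [zpow_negSucc]
    have hmp := perm_pow_mp e h (n + 1)
    have hminv : Measurable (⇑((e ^ (n+1))⁻¹)) := by
      rw [← inv_pow]; exact perm_inv_pow_meas e hs (n + 1)
    let me : X ≃ᵐ X :=
      { toEquiv := (e ^ (n+1) : Equiv.Perm X)
        measurable_toFun := hmp.measurable
        measurable_invFun := by simpa [Equiv.Perm.inv_def] using hminv }
    have h2 : MeasurePreserving (⇑me) μ μ := hmp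
    have h3 := h2.symm me
    exact h3

end PermAux

section AddRightAux
variable {G : Type*} [AddCommGroup G]

lemma addRight_add' (a b : G) :
    Equiv.addRight (a + b) = Equiv.addRight a * Equiv.addRight b := by
  ext x; simp [Equiv.Perm.mul_apply]; abel

lemma addRight_zpow' (a : G) (z : ℤ) :
    (Equiv.addRight a) ^ z = Equiv.addRight (z • a) := by
  induction z using Int.induction_on with
  | zero => ext x; simp
  | succ n ih => rw [zpow_add_one, ih, add_smul, one_smul, addRight_add']
  | pred n ih =>
    rw [zpow_sub_one, ih, sub_smul, one_smul, sub_eq_add_neg, addRight_add']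
    congr 1
    ext x
    simp [Equiv.Perm.inv_def]

lemma prod_ofFn_addRight {n : ℕ} (v : Fin n → G) :
    (List.ofFn fun i => Equiv.addRight (v i)).prod = Equiv.addRight (∑ i, v i) := by
  induction n with
  | zero => ext x; simp
  | succ n ih =>
    rw [List.ofFn_succ, List.prod_cons, ih fun i => v i.succ, Fin.sum_univ_succ,
      addRight_add']

end AddRightAux

section TpowAux
variable {μ : Measure X}

/-- `T₁^{l 1} ⋯ T_d^{l d}`. -/
def Tpow {d : ℕ} (T : Fin d → Equiv.Perm X) (l : Fin d → ℤ) : Equiv.Perm X :=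
  (List.ofFn fun i => T i ^ (l i)).prod

lemma Tpow_succ {d : ℕ} (T : Fin (d+1) → Equiv.Perm X) (l : Fin (d+1) → ℤ) :
    Tpow T l = T 0 ^ (l 0) * Tpow (fun i => T i.succ) (fun i => l i.succ) := by
  rw [Tpow, List.ofFn_succ, List.prod_cons]; rfl

lemma Tpow_mp {d : ℕ} (T : Fin d → Equiv.Perm X)
    (hT : ∀ i, MeasurePreserving (⇑(T i)) μ μ) (hTs : ∀ i, Measurable (⇑(T i).symm))
    (l : Fin d → ℤ) : MeasurePreserving (⇑(Tpow T l)) μ μ := by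
  induction d with
  | zero => simpa [Tpow] using MeasurePreserving.id μ
  | succ d ih =>
    rw [Tpow_succ]
    have h1 : ⇑(T 0 ^ (l 0) * Tpow (fun i => T i.succ) (fun i => l i.succ))
        = ⇑(T 0 ^ (l 0)) ∘ ⇑(Tpow (fun i => T i.succ) (fun i => l i.succ)) := by
      ext x; simp [Equiv.Perm.mul_apply]
    rw [h1]
    exact (perm_zpow_mp (T 0) (hT 0) (hTs 0) (l 0)).comp
      (ih (fun i => T i.succ) (fun i => hT i.succ) (fun i => hTs i.succ) (fun i => l i.succ))

lemma Tpow_add {d : ℕ} (T : Fin d → Equiv.Perm X)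
    (hT : ∀ i i', Commute (T i) (T i')) (a b : Fin d → ℤ) :
    Tpow T (a + b) = Tpow T a * Tpow T b := by
  induction d with
  | zero =>
    have : ∀ c : Fin 0 → ℤ, Tpow T c = 1 := fun c => by simp [Tpow]
    rw [this, this, this, one_mul]
  | succ d ih =>
    rw [Tpow_succ, Tpow_succ, Tpow_succ]
    have hadd : (a + b) 0 = a 0 + b 0 := rfl
    have htail : (fun i : Fin d => (a + b) i.succ)
        = (fun i => a i.succ) + (fun i => b i.succ) := rfl
    rw [hadd, htail, ih (fun i => T i.succ) (fun i i' => hT i.succ i'.succ), zpow_add]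
    have hc : Commute (T 0 ^ (b 0)) (Tpow (fun i => T i.succ) (fun i => a i.succ)) := by
      apply Commute.list_prod_right
      intro y hy
      rw [List.mem_ofFn] at hy
      obtain ⟨i, rfl⟩ := hy
      exact (hT 0 i.succ).zpow_zpow _ _
    rw [mul_assoc, mul_assoc, ← mul_assoc (T 0 ^ (b 0)), hc.eq, mul_assoc]

lemma Tpow_canShift (d : ℕ) (w : Fin d → ℤ) :
    Tpow (canShift d) w = Equiv.addRight w := by
  have h1 : ∀ i : Fin d, (canShift d i) ^ (w i)
      = Equiv.addRight ((Pi.single i (w i) : Fin d → ℤ)) := by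
    intro i
    rw [canShift, addRight_zpow']
    congr 1
    ext i'
    by_cases h : i' = i <;> simp [Pi.single_apply, h]
  rw [Tpow]
  simp_rw [h1]
  rw [prod_ofFn_addRight]
  congr 1
  exact Finset.univ_sum_single w

end TpowAux

section CountAux
variable {α : Type*} [MeasurableSpace α]

lemma eLpNorm_count_eq [MeasurableSingletonClass α]
    (g : α → ℝ) (s : Finset α) (hs : ∀ a ∉ s, g a = 0) {r : ℝ} (hr : 0 < r) :
    eLpNorm g (ENNReal.ofReal r) Measure.count
      = (∑ a ∈ s, ((‖g a‖₊ : ℝ≥0∞)) ^ r) ^ (1/r) := by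
  rw [eLpNorm_eq_lintegral_rpow_enorm_toReal (ENNReal.ofReal_pos.mpr hr).ne' ENNReal.ofReal_ne_top,
    lintegral_count, ENNReal.toReal_ofReal hr.le]
  congr 1
  refine tsum_eq_sum ?_
  intro a ha
  rw [hs a ha]
  simp [ENNReal.zero_rpow_of_pos hr]

lemma memℒp_count_finite_support [Countable α] [MeasurableSingletonClass α]
    (g : α → ℝ) (s : Finset α) (hs : ∀ a ∉ s, g a = 0)
    {r : ℝ} (hr : 0 < r) : MemLp g (ENNReal.ofReal r) Measure.count := by
  refine ⟨(measurable_of_countable g).aestronglyMeasurable, ?_⟩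
  rw [eLpNorm_count_eq g s hs hr]
  refine ENNReal.rpow_lt_top_of_nonneg (by positivity) ?_
  exact (ENNReal.sum_lt_top.mpr fun a _ =>
    ENNReal.rpow_lt_top_of_nonneg hr.le ENNReal.coe_ne_top).ne

end CountAux

lemma ennreal_prod_rpow_sum {ι : Type*} (s : Finset ι) (c : ℝ≥0∞) (hc0 : c ≠ 0) (hct : c ≠ ⊤)
    (θ : ι → ℝ) : ∏ j ∈ s, c ^ θ j = c ^ (∑ j ∈ s, θ j) := by
  classical
  induction s using Finset.induction with
  | empty => simp
  | @insert a s ha ih =>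
    rw [Finset.prod_insert ha, Finset.sum_insert ha, ih, ENNReal.rpow_add _ _ hc0 hct]

lemma card_box (d S : ℕ) :
    (Fintype.piFinset fun _ : Fin d => Finset.Icc (-(S:ℤ)) (S:ℤ)).card = (2*S+1)^d := by
  rw [Fintype.card_piFinset]
  have h : (Finset.Icc (-(S:ℤ)) (S:ℤ)).card = 2*S+1 := by
    rw [Int.card_Icc]; omega
  simp [h]

lemma le_of_box_ratio (J B : ℝ≥0∞) (ρ d : ℕ)
    (h : ∀ R : ℕ, (((2*R+1)^d : ℕ) : ℝ≥0∞) * J ≤ (((2*(R+ρ)+1)^d : ℕ) : ℝ≥0∞) * B) :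
    J ≤ B := by
  rcases eq_top_or_lt_top B with hB | hB
  · simp [hB]
  set q : ℕ → ℝ≥0 := fun R => ((2*(R+ρ)+1 : ℝ≥0)^d / (2*R+1)^d) with hq
  have hq1 : Tendsto q atTop (nhds 1) := by
    rw [← NNReal.tendsto_coe]
    have h1 : Tendsto (fun R : ℕ => (2*(R:ℝ)+1)) atTop atTop := by
      apply tendsto_atTop_add_const_right
      exact (tendsto_natCast_atTop_atTop).const_mul_atTop (by norm_num)
    have h2 : Tendsto (fun R : ℕ => (2*(ρ:ℝ)) / (2*(R:ℝ)+1)) atTop (nhds 0) :=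
      h1.const_div_atTop _
    have h3 : Tendsto (fun R : ℕ => 1 + (2*(ρ:ℝ)) / (2*(R:ℝ)+1)) atTop (nhds 1) := by
      simpa using h2.const_add 1
    have h4 : Tendsto (fun R : ℕ => (1 + (2*(ρ:ℝ)) / (2*(R:ℝ)+1))^d) atTop (nhds 1) := by
      simpa using h3.pow d
    have h5 : (fun R : ℕ => ((q R : ℝ)))
        = fun R : ℕ => (1 + (2*(ρ:ℝ)) / (2*(R:ℝ)+1))^d := by
      funext R
      have hpos : (2*(R:ℝ)+1) ≠ 0 := by positivity
      rw [hq]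
      push_cast
      rw [← div_pow]
      congr 1
      field_simp
      ring
    rw [h5]
    exact h4
  have hqJ : ∀ R : ℕ, J ≤ ((q R : ℝ≥0∞)) * B := by
    intro R
    have hb0 : (((2*R+1)^d : ℕ) : ℝ≥0∞) ≠ 0 := by
      exact_mod_cast Nat.cast_ne_zero.mpr ((pow_pos (by omega : 0 < 2*R+1) d).ne')
    have hbt : (((2*R+1)^d : ℕ) : ℝ≥0∞) ≠ ⊤ := ENNReal.natCast_ne_top _
    have h6 : J * (((2*R+1)^d : ℕ) : ℝ≥0∞) ≤ (((2*(R+ρ)+1)^d : ℕ) : ℝ≥0∞) * B := by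
      rw [mul_comm]; exact h R
    have h7 := (ENNReal.le_div_iff_mul_le (Or.inl hb0) (Or.inl hbt)).mpr h6
    refine h7.trans (le_of_eq ?_)
    rw [div_eq_mul_inv, mul_right_comm, ← div_eq_mul_inv]
    congr 1
    rw [hq]
    have hd0 : ((2*R+1 : ℝ≥0))^d ≠ 0 := by positivity
    rw [ENNReal.coe_div hd0]
    push_cast
    rfl
  have htend : Tendsto (fun R => ((q R : ℝ≥0∞)) * B) atTop (nhds ((1:ℝ≥0∞) * B)) :=
    ENNReal.Tendsto.mul_const (ENNReal.tendsto_coe.mpr hq1) (Or.inr hB.ne)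
  have := ge_of_tendsto htend (Eventually.of_forall hqJ)
  simpa using this

lemma polyAvg_measurable {d m k : ℕ} {μ : Measure X} (T : Fin d → Equiv.Perm X)
    (hTmp : ∀ i, MeasurePreserving (⇑(T i)) μ μ) (hTsm : ∀ i, Measurable (⇑(T i).symm))
    (P : Fin d → Fin m → MvPolynomial (Fin k) ℤ) (f : Fin m → X → ℝ)
    (hfm : ∀ j, Measurable (f j)) (N : ℕ) : Measurable (polyAvg T P f N) := by
  apply Measurable.div_const
  apply Finset.measurable_sum
  intro n _
  apply Finset.measurable_prod
  intro j _
  exact (hfm j).comp (Tpow_mp T hTmp hTsm fun i => MvPolynomial.eval n (P i j)).measurable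

lemma transfer_key_K {d m k : ℕ} (μ : Measure X)
    (T : Fin d → Equiv.Perm X)
    (hTmp : ∀ i, MeasurePreserving (⇑(T i)) μ μ)
    (hTsm : ∀ i, Measurable (⇑(T i).symm))
    (hTcomm : ∀ i i', Commute (T i) (T i'))
    (P : Fin d → Fin m → MvPolynomial (Fin k) ℤ)
    (O : (ℕ → ℝ) → ℝ≥0∞) (OK : (K : ℕ) → (Fin K → ℝ) → ℝ≥0)
    (hOKm : ∀ K, Measurable (OK K))
    (hO1 : ∀ (a : ℕ → ℝ) (K : ℕ), ((OK K fun i => a i : ℝ≥0) : ℝ≥0∞) ≤ O a)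
    (p : Fin (m + 1) → ℝ) (hp : ∀ i, 0 < p i)
    (hHolder : ∑ j : Fin m, 1 / p j.succ = 1 / p 0)
    (C : ℝ≥0∞)
    (hC : ∀ F : Fin m → (Fin d → ℤ) → ℝ,
      (∀ j : Fin m, MemLp (F j) (ENNReal.ofReal (p j.succ)) Measure.count) →
      (∫⁻ l, O (fun N => polyAvg (canShift d) P F (N + 1) l) ^ p 0 ∂Measure.count) ^ (1 / p 0) ≤
        C * ∏ j : Fin m, eLpNorm (F j) (ENNReal.ofReal (p j.succ)) Measure.count)
    (f : Fin m → X → ℝ) (hfm : ∀ j, Measurable (f j)) (K : ℕ) :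
    ∫⁻ x, ((OK K fun i : Fin K => polyAvg T P f (↑i + 1) x : ℝ≥0) : ℝ≥0∞) ^ p 0 ∂μ ≤
      (C * ∏ j : Fin m, eLpNorm (f j) (ENNReal.ofReal (p j.succ)) μ) ^ p 0 := by
  classical
  have hp0 : 0 < p 0 := hp 0
  set ρ : ℕ := Finset.univ.sup fun i : Fin d => Finset.univ.sup fun j : Fin m =>
      (Fintype.piFinset fun _ : Fin k => Finset.Icc (1:ℤ) (K:ℤ)).sup fun n =>
        (MvPolynomial.eval n (P i j)).natAbs with hρdef
  set Box : ℕ → Finset (Fin d → ℤ) :=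
    fun S' => Fintype.piFinset fun _ : Fin d => Finset.Icc (-(S':ℤ)) (S':ℤ) with hBoxdef
  set G : X → ℝ≥0∞ :=
    fun y => ((OK K fun i : Fin K => polyAvg T P f (↑i + 1) y : ℝ≥0) : ℝ≥0∞) ^ p 0 with hGdef
  have hGmeas : Measurable G := by
    apply Measurable.pow_const
    apply Measurable.coe_nnreal_ennreal
    exact (hOKm K).comp (measurable_pi_lambda _ fun i =>
      polyAvg_measurable T hTmp hTsm P f hfm _)
  apply le_of_box_ratio _ _ ρ d
  intro R
  set S := R + ρ with hSdef
  -- the key pointwise (in `x`) estimate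
  have key : ∀ x : X, ∑ l ∈ Box R, G ((Tpow T l) x) ≤
      C ^ p 0 * ∏ j : Fin m,
        (∑ w ∈ Box S, ((‖f j ((Tpow T w) x)‖₊ : ℝ≥0∞)) ^ p j.succ) ^ ((1 / p j.succ) * p 0) := by
    intro x
    set F : Fin m → (Fin d → ℤ) → ℝ :=
      fun j w => if w ∈ Box S then f j ((Tpow T w) x) else 0 with hFdef
    have hFs : ∀ j, ∀ w ∉ Box S, F j w = 0 := fun j w hw => if_neg hw
    have hFmem : ∀ j, MemLp (F j) (ENNReal.ofReal (p j.succ)) Measure.count :=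
      fun j => memℒp_count_finite_support (F j) (Box S) (hFs j) (hp j.succ)
    have h1 := hC F hFmem
    have h2 : (∫⁻ l, O (fun N => polyAvg (canShift d) P F (N + 1) l) ^ p 0 ∂Measure.count) ≤
        (C * ∏ j : Fin m, eLpNorm (F j) (ENNReal.ofReal (p j.succ)) Measure.count) ^ p 0 := by
      have h2' := ENNReal.rpow_le_rpow h1 hp0.le
      rwa [← ENNReal.rpow_mul, one_div, inv_mul_cancel₀ hp0.ne', ENNReal.rpow_one] at h2'
    -- the transference identity
    have hid : ∀ N : ℕ, N ≤ K → ∀ l, l ∈ Box R →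
        polyAvg T P f N ((Tpow T l) x) = polyAvg (canShift d) P F N l := by
      intro N hNK l hl
      rw [polyAvg, polyAvg]
      congr 1
      refine Finset.sum_congr rfl fun n hn => Finset.prod_congr rfl fun j _ => ?_
      have hv : ∀ i : Fin d, (MvPolynomial.eval n (P i j)).natAbs ≤ ρ := by
        intro i
        have hn' : n ∈ Fintype.piFinset fun _ : Fin k => Finset.Icc (1:ℤ) (K:ℤ) := by
          rw [Fintype.mem_piFinset] at hn ⊢
          intro t
          have ht := hn t
          rw [Finset.mem_Icc] at ht ⊢
          omega
        calc (MvPolynomial.eval n (P i j)).natAbs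
            ≤ (Fintype.piFinset fun _ : Fin k => Finset.Icc (1:ℤ) (K:ℤ)).sup
                (fun n => (MvPolynomial.eval n (P i j)).natAbs) :=
              Finset.le_sup (f := fun n => (MvPolynomial.eval n (P i j)).natAbs) hn'
          _ ≤ Finset.univ.sup (fun j' : Fin m =>
                (Fintype.piFinset fun _ : Fin k => Finset.Icc (1:ℤ) (K:ℤ)).sup
                  fun n => (MvPolynomial.eval n (P i j')).natAbs) :=
              Finset.le_sup (f := fun j' : Fin m =>
                (Fintype.piFinset fun _ : Fin k => Finset.Icc (1:ℤ) (K:ℤ)).sup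
                  fun n => (MvPolynomial.eval n (P i j')).natAbs) (Finset.mem_univ j)
          _ ≤ ρ := by
              rw [hρdef]
              exact Finset.le_sup (f := fun i' : Fin d => Finset.univ.sup fun j' : Fin m =>
                (Fintype.piFinset fun _ : Fin k => Finset.Icc (1:ℤ) (K:ℤ)).sup
                  fun n => (MvPolynomial.eval n (P i' j')).natAbs) (Finset.mem_univ i)
      set v : Fin d → ℤ := fun i => MvPolynomial.eval n (P i j) with hvdef
      have hZ : (compT (canShift d) P j n) l = l + v := by
        have hce : compT (canShift d) P j n = Tpow (canShift d) v := rfl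
        rw [hce, Tpow_canShift d v]
        rfl
      have hmem : l + v ∈ Box S := by
        rw [hBoxdef] at hl ⊢
        rw [Fintype.mem_piFinset] at hl ⊢
        intro i
        have h1' := hl i
        rw [Finset.mem_Icc] at h1' ⊢
        have h2' := hv i
        simp only [Pi.add_apply, hvdef]
        rw [hSdef]
        omega
      have hX : (compT T P j n) ((Tpow T l) x) = (Tpow T (l + v)) x := by
        have h5 : compT T P j n = Tpow T v := rfl
        rw [h5, add_comm l v, Tpow_add T hTcomm v l]
        rfl
      rw [hX, hZ]
      simp only [hFdef]
      rw [if_pos hmem]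
    -- lower bound for the left-hand side of h2
    have h3 : ∑ l ∈ Box R, G ((Tpow T l) x) ≤
        ∫⁻ l, O (fun N => polyAvg (canShift d) P F (N + 1) l) ^ p 0 ∂Measure.count := by
      rw [lintegral_count]
      refine le_trans (Finset.sum_le_sum ?_) (ENNReal.sum_le_tsum (Box R))
      intro l hl
      simp only [hGdef]
      have heq : (fun i : Fin K => polyAvg T P f (↑i + 1) ((Tpow T l) x))
          = fun i : Fin K => polyAvg (canShift d) P F (↑i + 1) l := by
        funext i
        have h9 := hid (↑i + 1) i.isLt l hl
        exact h9
      rw [heq]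
      exact ENNReal.rpow_le_rpow
        (hO1 (fun N => polyAvg (canShift d) P F (N + 1) l) K) hp0.le
    -- rewrite the right-hand side of h2
    have h4 : (C * ∏ j : Fin m, eLpNorm (F j) (ENNReal.ofReal (p j.succ)) Measure.count) ^ p 0
        = C ^ p 0 * ∏ j : Fin m,
          (∑ w ∈ Box S, ((‖f j ((Tpow T w) x)‖₊ : ℝ≥0∞)) ^ p j.succ) ^ ((1 / p j.succ) * p 0) := by
      rw [ENNReal.mul_rpow_of_nonneg _ _ hp0.le, ← ENNReal.prod_rpow_of_nonneg hp0.le]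
      congr 1
      refine Finset.prod_congr rfl fun j _ => ?_
      rw [eLpNorm_count_eq (F j) (Box S) (hFs j) (hp j.succ), ← ENNReal.rpow_mul]
      congr 1
      refine Finset.sum_congr rfl fun w hw => ?_
      congr 2
      simp only [hFdef]
      rw [if_pos hw]
    exact h3.trans (h2.trans (le_of_eq h4))
  -- integrate the key estimate over `x`
  have hGcomp : ∀ l : Fin d → ℤ, Measurable fun x => G ((Tpow T l) x) :=
    fun l => hGmeas.comp (Tpow_mp T hTmp hTsm l).measurable
  have hnnmeas : ∀ (j : Fin m) (w : Fin d → ℤ),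
      Measurable fun x => ((‖f j ((Tpow T w) x)‖₊ : ℝ≥0∞)) ^ p j.succ :=
    fun j w => (((hfm j).comp
      (Tpow_mp T hTmp hTsm w).measurable).nnnorm.coe_nnreal_ennreal).pow_const _
  have hleft : ∫⁻ x, ∑ l ∈ Box R, G ((Tpow T l) x) ∂μ
      = ((Box R).card : ℝ≥0∞) * ∫⁻ x, G x ∂μ := by
    rw [lintegral_finset_sum _ fun l _ => hGcomp l,
      Finset.sum_congr rfl fun l _ => (Tpow_mp T hTmp hTsm l).lintegral_comp hGmeas,
      Finset.sum_const, nsmul_eq_mul]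
  have hgj : ∀ j : Fin m,
      ∫⁻ x, (∑ w ∈ Box S, ((‖f j ((Tpow T w) x)‖₊ : ℝ≥0∞)) ^ p j.succ) ∂μ
      = ((Box S).card : ℝ≥0∞) * ∫⁻ x, ((‖f j x‖₊ : ℝ≥0∞)) ^ p j.succ ∂μ := by
    intro j
    rw [lintegral_finset_sum _ fun w _ => hnnmeas j w,
      Finset.sum_congr rfl fun w _ => (Tpow_mp T hTmp hTsm w).lintegral_comp
        ((hfm j).nnnorm.coe_nnreal_ennreal.pow_const _),
      Finset.sum_const, nsmul_eq_mul]
  have hHolder2 : ∑ j : Fin m, (1 / p j.succ) * p 0 = 1 := by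
    rw [← Finset.sum_mul, hHolder, one_div, inv_mul_cancel₀ hp0.ne']
  have hHolder3 := ENNReal.lintegral_prod_norm_pow_le (μ := μ) Finset.univ
      (f := fun j x => ∑ w ∈ Box S, ((‖f j ((Tpow T w) x)‖₊ : ℝ≥0∞)) ^ p j.succ)
      (fun j _ => (Finset.measurable_sum _ fun w _ => hnnmeas j w).aemeasurable)
      (p := fun j => (1 / p j.succ) * p 0) hHolder2
      (fun j _ => mul_nonneg (one_div_nonneg.mpr (hp j.succ).le) hp0.le)
  have hcardS0 : ((Box S).card : ℝ≥0∞) ≠ 0 := by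
    rw [hBoxdef, card_box]
    exact_mod_cast Nat.cast_ne_zero.mpr (pow_pos (by omega : 0 < 2*S+1) d).ne'
  have hcardSt : ((Box S).card : ℝ≥0∞) ≠ ⊤ := ENNReal.natCast_ne_top _
  have heLp : ∀ j : Fin m,
      (∫⁻ x, ((‖f j x‖₊ : ℝ≥0∞)) ^ p j.succ ∂μ) ^ ((1 / p j.succ) * p 0)
      = (eLpNorm (f j) (ENNReal.ofReal (p j.succ)) μ) ^ p 0 := by
    intro j
    rw [eLpNorm_eq_lintegral_rpow_enorm_toReal (ENNReal.ofReal_pos.mpr (hp j.succ)).ne'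
      ENNReal.ofReal_ne_top, ENNReal.toReal_ofReal (hp j.succ).le, ← ENNReal.rpow_mul]
    rfl
  calc (((2*R+1)^d : ℕ) : ℝ≥0∞) * ∫⁻ x, G x ∂μ
      = ∫⁻ x, ∑ l ∈ Box R, G ((Tpow T l) x) ∂μ := by
        rw [hleft, hBoxdef, card_box]
    _ ≤ ∫⁻ x, C ^ p 0 * ∏ j : Fin m,
          (∑ w ∈ Box S, ((‖f j ((Tpow T w) x)‖₊ : ℝ≥0∞)) ^ p j.succ)
            ^ ((1 / p j.succ) * p 0) ∂μ := lintegral_mono key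
    _ = C ^ p 0 * ∫⁻ x, ∏ j : Fin m,
          (∑ w ∈ Box S, ((‖f j ((Tpow T w) x)‖₊ : ℝ≥0∞)) ^ p j.succ)
            ^ ((1 / p j.succ) * p 0) ∂μ := by
        rw [lintegral_const_mul]
        exact Finset.measurable_prod _ fun j _ =>
          (Finset.measurable_sum _ fun w _ => hnnmeas j w).pow_const _
    _ ≤ C ^ p 0 * ∏ j : Fin m,
          (∫⁻ x, (∑ w ∈ Box S, ((‖f j ((Tpow T w) x)‖₊ : ℝ≥0∞)) ^ p j.succ) ∂μ)
            ^ ((1 / p j.succ) * p 0) := mul_le_mul_right hHolder3 _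
    _ = C ^ p 0 * ∏ j : Fin m,
          (((Box S).card : ℝ≥0∞) ^ ((1 / p j.succ) * p 0) *
            (∫⁻ x, ((‖f j x‖₊ : ℝ≥0∞)) ^ p j.succ ∂μ) ^ ((1 / p j.succ) * p 0)) := by
        congr 1
        refine Finset.prod_congr rfl fun j _ => ?_
        rw [hgj j, ENNReal.mul_rpow_of_nonneg _ _ (mul_nonneg (one_div_nonneg.mpr (hp j.succ).le) hp0.le)]
    _ = (((2*(R+ρ)+1)^d : ℕ) : ℝ≥0∞) *
          (C * ∏ j : Fin m, eLpNorm (f j) (ENNReal.ofReal (p j.succ)) μ) ^ p 0 := by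
        rw [Finset.prod_mul_distrib, ennreal_prod_rpow_sum _ _ hcardS0 hcardSt, hHolder2,
          ENNReal.rpow_one, Finset.prod_congr rfl fun j _ => heLp j,
          ENNReal.mul_rpow_of_nonneg _ _ hp0.le, ← ENNReal.prod_rpow_of_nonneg hp0.le]
        rw [hBoxdef, card_box]
        ring

lemma transfer_key {d m k : ℕ} (μ : Measure X)
    (T : Fin d → Equiv.Perm X)
    (hTmp : ∀ i, MeasurePreserving (⇑(T i)) μ μ)
    (hTsm : ∀ i, Measurable (⇑(T i).symm))
    (hTcomm : ∀ i i', Commute (T i) (T i'))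
    (P : Fin d → Fin m → MvPolynomial (Fin k) ℤ)
    (O : (ℕ → ℝ) → ℝ≥0∞) (OK : (K : ℕ) → (Fin K → ℝ) → ℝ≥0)
    (hOKm : ∀ K, Measurable (OK K))
    (hO1 : ∀ (a : ℕ → ℝ) (K : ℕ), ((OK K fun i => a i : ℝ≥0) : ℝ≥0∞) ≤ O a)
    (hO2 : ∀ a : ℕ → ℝ,
      Tendsto (fun K => ((OK K fun i => a i : ℝ≥0) : ℝ≥0∞)) atTop (nhds (O a)))
    (p : Fin (m + 1) → ℝ) (hp : ∀ i, 0 < p i)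
    (hHolder : ∑ j : Fin m, 1 / p j.succ = 1 / p 0)
    (C : ℝ≥0∞)
    (hC : ∀ F : Fin m → (Fin d → ℤ) → ℝ,
      (∀ j : Fin m, MemLp (F j) (ENNReal.ofReal (p j.succ)) Measure.count) →
      (∫⁻ l, O (fun N => polyAvg (canShift d) P F (N + 1) l) ^ p 0 ∂Measure.count) ^ (1 / p 0) ≤
        C * ∏ j : Fin m, eLpNorm (F j) (ENNReal.ofReal (p j.succ)) Measure.count)
    (f : Fin m → X → ℝ) (hfm : ∀ j, Measurable (f j)) :
    (∫⁻ x, O (fun N => polyAvg T P f (N + 1) x) ^ p 0 ∂μ) ^ (1 / p 0) ≤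
      C * ∏ j : Fin m, eLpNorm (f j) (ENNReal.ofReal (p j.succ)) μ := by
  have hp0 : 0 < p 0 := hp 0
  set A := C * ∏ j : Fin m, eLpNorm (f j) (ENNReal.ofReal (p j.succ)) μ with hA
  have hK : ∀ K : ℕ,
      ∫⁻ x, ((OK K fun i : Fin K => polyAvg T P f (↑i + 1) x : ℝ≥0) : ℝ≥0∞) ^ p 0 ∂μ
        ≤ A ^ p 0 :=
    fun K => transfer_key_K μ T hTmp hTsm hTcomm P O OK hOKm hO1 p hp hHolder C hC f hfm K
  have hmain : ∫⁻ x, O (fun N => polyAvg T P f (N + 1) x) ^ p 0 ∂μ ≤ A ^ p 0 := by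
    have hpt : ∀ x : X, O (fun N => polyAvg T P f (N + 1) x) ^ p 0
        = Filter.liminf (fun K : ℕ =>
            ((OK K fun i : Fin K => polyAvg T P f (↑i + 1) x : ℝ≥0) : ℝ≥0∞) ^ p 0) atTop := by
      intro x
      have h6 : Tendsto (fun K : ℕ =>
          ((OK K fun i : Fin K => polyAvg T P f (↑i + 1) x : ℝ≥0) : ℝ≥0∞) ^ p 0) atTop
          (nhds (O (fun N => polyAvg T P f (N + 1) x) ^ p 0)) :=
        (ENNReal.continuous_rpow_const.tendsto _).comp
          (hO2 (fun N => polyAvg T P f (N + 1) x))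
      exact h6.liminf_eq.symm
    calc ∫⁻ x, O (fun N => polyAvg T P f (N + 1) x) ^ p 0 ∂μ
        = ∫⁻ x, Filter.liminf (fun K : ℕ =>
            ((OK K fun i : Fin K => polyAvg T P f (↑i + 1) x : ℝ≥0) : ℝ≥0∞) ^ p 0) atTop ∂μ :=
          lintegral_congr fun x => hpt x
      _ ≤ Filter.liminf (fun K : ℕ =>
            ∫⁻ x, ((OK K fun i : Fin K => polyAvg T P f (↑i + 1) x : ℝ≥0) : ℝ≥0∞) ^ p 0 ∂μ)
            atTop := by
          apply lintegral_liminf_le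
          intro K
          exact (((hOKm K).comp (measurable_pi_lambda _ fun i =>
            polyAvg_measurable T hTmp hTsm P f hfm _)).coe_nnreal_ennreal).pow_const _
      _ ≤ A ^ p 0 := by
          refine le_trans (Filter.liminf_le_liminf (Eventually.of_forall hK)) ?_
          simp
  have hfin := ENNReal.rpow_le_rpow hmain (by positivity : (0:ℝ) ≤ 1 / p 0)
  rwa [← ENNReal.rpow_mul, mul_one_div_cancel hp0.ne', ENNReal.rpow_one] at hfin

/-- Calderón transference principle, strong type: for every admissible `O`, every nontrivial
σ-finite system with commuting invertible bimeasurable measure-preserving transformations,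
every family of integer polynomials `P`, and every Hölder tuple `p`,
`C_O^P(X, p, s) ≤ C_O^P(X_d, p, s)` where `X_d = ℤ^d` is the canonical system. -/
theorem calderon_transference_strong
    {X : Type*} [MeasurableSpace X] (μ : Measure X) [SigmaFinite μ]
    (hX : ∃ E : Set X, MeasurableSet E ∧ 0 < μ E ∧ μ E < ∞)
    (d m k : ℕ) (hd : 0 < d) (hm : 0 < m) (hk : 0 < k)
    (T : Fin d → Equiv.Perm X)
    (hTmp : ∀ i, MeasurePreserving (⇑(T i)) μ μ)
    (hTsm : ∀ i, Measurable (⇑(T i).symm))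
    (hTcomm : ∀ i i', Commute (T i) (T i'))
    (P : Fin d → Fin m → MvPolynomial (Fin k) ℤ)
    (O : (ℕ → ℝ) → ℝ≥0∞)
    (OK : (K : ℕ) → (Fin K → ℝ) → ℝ≥0)
    (hOKm : ∀ K, Measurable (OK K))
    (hO1 : ∀ (a : ℕ → ℝ) (K : ℕ), ((OK K fun i => a i : ℝ≥0) : ℝ≥0∞) ≤ O a)
    (hO2 : ∀ a : ℕ → ℝ,
      Tendsto (fun K => ((OK K fun i => a i : ℝ≥0) : ℝ≥0∞)) atTop (nhds (O a)))
    (p : Fin (m + 1) → ℝ) (hp : ∀ i, 0 < p i)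
    (hHolder : ∑ j : Fin m, 1 / p j.succ = 1 / p 0) :
    strongConstO μ T P O p ≤
      strongConstO (Measure.count : Measure (Fin d → ℤ)) (canShift d) P O p := by
  rw [strongConstO, strongConstO]
  apply sInf_le_sInf
  intro C hC
  simp only [Set.mem_setOf_eq] at hC ⊢
  intro f hf
  set g : Fin m → X → ℝ := fun j => (hf j).1.mk (f j) with hg
  have hfg : ∀ j, f j =ᵐ[μ] g j := fun j => (hf j).1.ae_eq_mk
  have hgm : ∀ j, Measurable (g j) := fun j => (hf j).1.stronglyMeasurable_mk.measurable
  have hnorm : ∀ j, eLpNorm (f j) (ENNReal.ofReal (p j.succ)) μ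
      = eLpNorm (g j) (ENNReal.ofReal (p j.succ)) μ := fun j => eLpNorm_congr_ae (hfg j)
  have hae : ∀ᵐ x ∂μ, ∀ (j : Fin m) (n : Fin k → ℤ),
      f j ((compT T P j n) x) = g j ((compT T P j n) x) := by
    rw [ae_all_iff]
    intro j
    rw [ae_all_iff]
    intro n
    have h0 : μ {y | f j y ≠ g j y} = 0 := by
      have h0' := hfg j
      rwa [Filter.EventuallyEq, ae_iff] at h0'
    have hqmp := (Tpow_mp T hTmp hTsm
      (fun i => MvPolynomial.eval n (P i j))).quasiMeasurePreserving
    have h1 := hqmp.preimage_null h0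
    rw [ae_iff]
    exact h1
  have havg : ∀ᵐ x ∂μ, (fun N => polyAvg T P f (N + 1) x)
      = fun N => polyAvg T P g (N + 1) x := by
    filter_upwards [hae] with x hx
    funext N
    rw [polyAvg, polyAvg]
    congr 1
    exact Finset.sum_congr rfl fun n _ => Finset.prod_congr rfl fun j _ => hx j n
  have hint : ∫⁻ x, O (fun N => polyAvg T P f (N + 1) x) ^ p 0 ∂μ
      = ∫⁻ x, O (fun N => polyAvg T P g (N + 1) x) ^ p 0 ∂μ :=
    lintegral_congr_ae (by filter_upwards [havg] with x hx; rw [hx])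
  rw [hint, Finset.prod_congr rfl fun j _ => hnorm j]
  exact transfer_key μ T hTmp hTsm hTcomm P O OK hOKm hO1 hO2 p hp hHolder C hC g hgm

end
end

section
/- For each p ∈ [1, ∞], the best constants for the one-sided, centered, and uncentered ergodic maximal operators on any nontrivial σ-finite system are dominated by the corresponding constants on the integers: C⁻(X, p) ≤ C⁻(X₁, p), C^c(X, p) ≤ C^c(X₁, p), and C^u(X, p) ≤ C^u(X₁, p). -/
open MeasureTheory ENNReal Filter

noncomputable section

variable {X : Type*} [MeasurableSpace X]

/-- The one-sided ergodic maximal operator `M⁻f(x) = sup_N |(1/(N+1)) Σ_{n=0}^N f(Tⁿx)|`. -/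
def maxOS (T : Equiv.Perm X) (f : X → ℝ) (x : X) : ℝ≥0∞ :=
  ⨆ N : ℕ,
    (‖(∑ n ∈ Finset.range (N + 1), f ((T ^ n) x)) / ((N : ℝ) + 1)‖₊ : ℝ≥0∞)

/-- The centered ergodic maximal operator `M^c f(x) = sup_N |(1/(2N+1)) Σ_{n=-N}^N f(Tⁿx)|`. -/
def maxC (T : Equiv.Perm X) (f : X → ℝ) (x : X) : ℝ≥0∞ :=
  ⨆ N : ℕ,
    (‖(∑ n ∈ Finset.Icc (-(N : ℤ)) (N : ℤ), f ((T ^ n) x)) / (2 * (N : ℝ) + 1)‖₊ : ℝ≥0∞)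

/-- The uncentered ergodic maximal operator
`M^u f(x) = sup_{r,s ≥ 0} |(1/(r+s+1)) Σ_{n=-r}^{s} f(Tⁿx)|`. -/
def maxU (T : Equiv.Perm X) (f : X → ℝ) (x : X) : ℝ≥0∞ :=
  ⨆ r : ℕ, ⨆ s : ℕ,
    (‖(∑ n ∈ Finset.Icc (-(r : ℤ)) (s : ℤ), f ((T ^ n) x)) / ((r : ℝ) + (s : ℝ) + 1)‖₊ : ℝ≥0∞)

/-- The best constant in the weak type (1,1) inequality for a maximal operator `M`:
the smallest `C` with `λ · μ({x : M f(x) ≥ λ}) ≤ C ‖f‖₁` for all `f ∈ L¹(μ)` and all `λ`. -/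
def weakConst (μ : Measure X) (M : (X → ℝ) → X → ℝ≥0∞) : ℝ≥0∞ :=
  sInf {C | ∀ f : X → ℝ, Integrable f μ →
    ∀ l : ℝ≥0∞, l * μ {x | l ≤ M f x} ≤ C * eLpNorm f 1 μ}

/-- The best constant in the strong type (p,p) inequality for a maximal operator `M`:
the smallest `C` with `‖M f‖_p ≤ C ‖f‖_p` for all `f ∈ L^p(μ)`. -/
def strongConst (μ : Measure X) (M : (X → ℝ) → X → ℝ≥0∞) (p : ℝ) : ℝ≥0∞ :=
  sInf {C | ∀ f : X → ℝ, MemLp f (ENNReal.ofReal p) μ →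
    (∫⁻ x, M f x ^ p ∂μ) ^ (1 / p) ≤ C * eLpNorm f (ENNReal.ofReal p) μ}

/-- The best constant in the `L^∞` inequality for a maximal operator `M`. -/
def supConst (μ : Measure X) (M : (X → ℝ) → X → ℝ≥0∞) : ℝ≥0∞ :=
  sInf {C | ∀ f : X → ℝ, MemLp f ∞ μ → essSup (M f) μ ≤ C * eLpNorm f ∞ μ}

/-- The best constant `C_M(X, p)` for `p ∈ [1,∞]`: the weak type (1,1) constant for `p = 1`,
the `L^∞` constant for `p = ∞`, and the strong type (p,p) constant for `p ∈ (1,∞)`. -/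
def bestConst (μ : Measure X) (M : (X → ℝ) → X → ℝ≥0∞) (p : ℝ≥0∞) : ℝ≥0∞ :=
  if p = 1 then weakConst μ M
  else if p = ∞ then supConst μ M
  else strongConst μ M p.toReal

/-- The shift `l ↦ l + 1` on `ℤ`, the transformation of the canonical system `X₁`. -/
def shiftZ : Equiv.Perm ℤ := Equiv.addRight 1

/-- Ergodicity of an invertible transformation:
`T⁻¹(E) = E` implies `μ(E) = 0` or `μ(X \ E) = 0`. -/
def IsErgodicPerm (μ : Measure X) (T : Equiv.Perm X) : Prop :=
  ∀ E : Set X, MeasurableSet E → (⇑T) ⁻¹' E = E → μ E = 0 ∨ μ Eᶜ = 0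

/-- Nontriviality of a measure space: there is a set of strictly positive finite measure. -/
def NontrivialSpace (μ : Measure X) : Prop :=
  ∃ E : Set X, MeasurableSet E ∧ 0 < μ E ∧ μ E < ∞

/-- `X` consists of finitely many atoms: it splits into disjoint measurable sets
`X₀, X₁, …, X_L` with `μ(X₀) = 0`, `T(X_l) ⊆ X_{l+1}` for `1 ≤ l ≤ L-1`, `T(X_L) ⊆ X₁`, and
no `X_l`, `1 ≤ l ≤ L`, splits into two disjoint measurable sets of nonzero measure. -/
def FinitelyManyAtoms (μ : Measure X) (T : Equiv.Perm X) : Prop :=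
  ∃ (L : ℕ) (A : ℕ → Set X), 0 < L ∧
    (∀ l, l ≤ L → MeasurableSet (A l)) ∧
    (∀ l l', l ≤ L → l' ≤ L → l ≠ l' → Disjoint (A l) (A l')) ∧
    (⋃ l ≤ L, A l) = Set.univ ∧
    μ (A 0) = 0 ∧
    (∀ l, 1 ≤ l → l ≤ L - 1 → ⇑T '' A l ⊆ A (l + 1)) ∧
    (⇑T '' A L ⊆ A 1) ∧
    (∀ l, 1 ≤ l → l ≤ L → ∀ S : Set X, MeasurableSet S → S ⊆ A l →
      μ S = 0 ∨ μ (A l \ S) = 0)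

/-- The Rokhlin condition (case (B) of the Kakutani–Rokhlin lemma): for each `L ∈ ℕ` there is
a set `E_L` of strictly positive finite measure with `T^{-l}(E_L)`, `l ∈ [L]`, disjoint. -/
def RokhlinCondition (μ : Measure X) (T : Equiv.Perm X) : Prop :=
  ∀ L : ℕ, 0 < L → ∃ E : Set X, MeasurableSet E ∧ 0 < μ E ∧ μ E < ∞ ∧
    ∀ l l' : ℕ, 1 ≤ l → l ≤ L → 1 ≤ l' → l' ≤ L → l ≠ l' →
      Disjoint ((⇑(T ^ l)) ⁻¹' E) ((⇑(T ^ l')) ⁻¹' E)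


namespace MaxTransfer

structure WF (ι : Type*) where
  W : ι → Finset ℤ
  c : ι → ℝ
  hc : ∀ i, 0 < c i
  hcard : ∀ i, ((W i).card : ℝ) ≤ c i
  i0 : ι
  hW0 : W i0 = {0}
  hc0 : c i0 = 1
  S : ℕ → Finset ι
  Smono : Monotone S
  Sexh : ∀ i, ∃ J, i ∈ S J
  Sbound : ∀ J, ∀ i ∈ S J, W i ⊆ Finset.Icc (-(J : ℤ)) (J : ℤ)

variable {ι : Type*} {Y : Type*} [MeasurableSpace Y]

def WF.M (F : WF ι) (T : Equiv.Perm Y) (f : Y → ℝ) (x : Y) : ℝ≥0∞ :=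
  ⨆ i, (‖(∑ n ∈ F.W i, f ((T ^ n) x)) / F.c i‖₊ : ℝ≥0∞)

def WF.Mtr (F : WF ι) (T : Equiv.Perm Y) (J : ℕ) (f : Y → ℝ) (x : Y) : ℝ≥0∞ :=
  ⨆ i ∈ F.S J, (‖(∑ n ∈ F.W i, f ((T ^ n) x)) / F.c i‖₊ : ℝ≥0∞)

lemma mp_zpow {μ : Measure Y} {T : Equiv.Perm Y} (hT : MeasurePreserving (⇑T) μ μ)
    (hTs : Measurable (⇑T.symm)) : ∀ n : ℤ, MeasurePreserving (⇑(T ^ n)) μ μ := by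
  have hsymm : MeasurePreserving (⇑T.symm) μ μ := by
    let e : Y ≃ᵐ Y := ⟨T, hT.measurable, hTs⟩
    exact MeasurePreserving.symm e hT
  intro n
  induction n using Int.induction_on with
  | zero => simpa using MeasurePreserving.id μ
  | succ k ih =>
      have h : (T ^ ((k : ℤ) + 1)) = T ^ (k : ℤ) * T := zpow_add_one T k
      rw [h, Equiv.Perm.coe_mul]
      exact ih.comp hT
  | pred k ih =>
      have h : (T ^ (-(k : ℤ) - 1)) = T ^ (-(k : ℤ)) * T⁻¹ := zpow_sub_one T (-k)
      rw [h, Equiv.Perm.coe_mul]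
      exact ih.comp (show MeasurePreserving (⇑T⁻¹) μ μ by
        simpa [Equiv.Perm.inv_def] using hsymm)

lemma shiftZ_zpow (n : ℤ) : ∀ m : ℤ, (shiftZ ^ n) m = m + n := by
  induction n using Int.induction_on with
  | zero => simp
  | succ k ih =>
      intro m
      rw [zpow_add_one, Equiv.Perm.mul_apply, ih]
      have : shiftZ m = m + 1 := rfl
      omega
  | pred k ih =>
      intro m
      rw [zpow_sub_one, Equiv.Perm.mul_apply, ih]
      have : shiftZ⁻¹ m = m - 1 := rfl
      omega

lemma zpow_apply_zpow (T : Equiv.Perm Y) (n m : ℤ) (x : Y) :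
    (T ^ n) ((T ^ m) x) = (T ^ (n + m)) x := by
  rw [zpow_add, Equiv.Perm.mul_apply]

lemma Mtr_shift (F : WF ι) (T : Equiv.Perm Y) (J : ℕ) (f : Y → ℝ) (x : Y) (m : ℤ) :
    F.Mtr T J f ((T ^ m) x) = F.Mtr shiftZ J (fun n => f ((T ^ n) x)) m := by
  unfold WF.Mtr
  refine iSup_congr fun i => iSup_congr fun _ => ?_
  have : (∑ n ∈ F.W i, f ((T ^ n) ((T ^ m) x))) = ∑ n ∈ F.W i, f ((T ^ ((shiftZ ^ n) m)) x) := by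
    refine Finset.sum_congr rfl fun n _ => ?_
    rw [zpow_apply_zpow, shiftZ_zpow, add_comm m n]
  rw [this]

lemma Mtr_congr (F : WF ι) (J : ℕ) (g h : ℤ → ℝ) (m : ℤ)
    (hgh : ∀ n : ℤ, m - J ≤ n → n ≤ m + J → g n = h n) :
    F.Mtr shiftZ J g m = F.Mtr shiftZ J h m := by
  unfold WF.Mtr
  refine iSup_congr fun i => iSup_congr fun hi => ?_
  have : (∑ n ∈ F.W i, g ((shiftZ ^ n) m)) = ∑ n ∈ F.W i, h ((shiftZ ^ n) m) := by
    refine Finset.sum_congr rfl fun n hn => ?_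
    have hn' := F.Sbound J i hi hn
    rw [Finset.mem_Icc] at hn'
    rw [shiftZ_zpow]
    exact hgh (m + n) (by omega) (by omega)
  rw [this]

lemma Mtr_le_M (F : WF ι) (T : Equiv.Perm Y) (J : ℕ) (f : Y → ℝ) (x : Y) :
    F.Mtr T J f x ≤ F.M T f x :=
  iSup₂_le fun i _ => le_iSup (fun i => (‖(∑ n ∈ F.W i, f ((T ^ n) x)) / F.c i‖₊ : ℝ≥0∞)) i

lemma Mtr_mono (F : WF ι) (T : Equiv.Perm Y) {J J' : ℕ} (h : J ≤ J') (f : Y → ℝ) (x : Y) :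
    F.Mtr T J f x ≤ F.Mtr T J' f x := by
  unfold WF.Mtr
  exact iSup₂_le fun i hi => le_iSup_of_le i (le_iSup_of_le (F.Smono h hi) le_rfl)

lemma iSup_Mtr (F : WF ι) (T : Equiv.Perm Y) (f : Y → ℝ) (x : Y) :
    ⨆ J, F.Mtr T J f x = F.M T f x := by
  refine le_antisymm (iSup_le fun J => Mtr_le_M F T J f x) (iSup_le fun i => ?_)
  obtain ⟨J, hJ⟩ := F.Sexh i
  refine le_trans ?_ (le_iSup (fun J => F.Mtr T J f x) J)
  unfold WF.Mtr
  exact le_iSup_of_le i (le_iSup_of_le hJ le_rfl)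

lemma measurable_term (F : WF ι) (T : Equiv.Perm Y)
    (hTn : ∀ n : ℤ, Measurable (⇑(T ^ n))) {f : Y → ℝ} (hf : Measurable f) (i : ι) :
    Measurable fun x => (‖(∑ n ∈ F.W i, f ((T ^ n) x)) / F.c i‖₊ : ℝ≥0∞) := by
  apply Measurable.coe_nnreal_ennreal
  apply Measurable.nnnorm
  exact (Finset.measurable_sum _ fun n _ => hf.comp (hTn n)).div_const _

lemma measurable_Mtr [Countable ι] (F : WF ι) (T : Equiv.Perm Y)
    (hTn : ∀ n : ℤ, Measurable (⇑(T ^ n))) {f : Y → ℝ} (hf : Measurable f) (J : ℕ) :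
    Measurable (F.Mtr T J f) :=
  Measurable.iSup fun i => Measurable.iSup fun _ => measurable_term F T hTn hf i

lemma measurable_M [Countable ι] (F : WF ι) (T : Equiv.Perm Y)
    (hTn : ∀ n : ℤ, Measurable (⇑(T ^ n))) {f : Y → ℝ} (hf : Measurable f) :
    Measurable (F.M T f) :=
  Measurable.iSup fun i => measurable_term F T hTn hf i

lemma crux {a b : ℝ≥0∞} (J : ℕ)
    (h : ∀ K : ℕ, ((2 * K + 1 : ℕ) : ℝ≥0∞) * a ≤ ((2 * K + 2 * J + 1 : ℕ) : ℝ≥0∞) * b) :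
    a ≤ b := by
  by_cases hb : b = ∞
  · simp [hb]
  have ha : a ≠ ∞ := by
    intro haa
    have h0 := h 0
    rw [haa, ENNReal.mul_top (by simp)] at h0
    exact (ENNReal.mul_ne_top (ENNReal.natCast_ne_top _) hb) (top_le_iff.mp h0)
  have hr : ∀ K : ℕ, (2 * (K : ℝ) + 1) * a.toReal ≤ (2 * K + 2 * J + 1) * b.toReal := by
    intro K
    have h2 := ENNReal.toReal_mono (ENNReal.mul_ne_top (ENNReal.natCast_ne_top _) hb) (h K)
    rw [ENNReal.toReal_mul, ENNReal.toReal_mul, ENNReal.toReal_natCast, ENNReal.toReal_natCast] at h2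
    push_cast at h2
    linarith
  have hba : a.toReal ≤ b.toReal := by
    by_contra hlt
    push_neg at hlt
    obtain ⟨K, hK⟩ := exists_nat_gt ((2 * (J : ℝ) * b.toReal) / (a.toReal - b.toReal))
    have hε : (0:ℝ) < a.toReal - b.toReal := by linarith
    have h3 := hr K
    rw [div_lt_iff₀ hε] at hK
    nlinarith [ENNReal.toReal_nonneg (a := b), Nat.cast_nonneg (α := ℝ) K]
  exact (ENNReal.toReal_le_toReal ha hb).mp hba

lemma mul_le_of_forall_lt {l m B : ℝ≥0∞} (h : ∀ a, a < l → a * m ≤ B) : l * m ≤ B := by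
  by_cases hm0 : m = 0
  · subst hm0
    simp only [mul_zero]
    exact bot_le
  by_cases hl0 : l = 0
  · subst hl0; simpa using h
  refine le_of_forall_lt_imp_le_of_dense fun d hd => ?_
  by_cases hm : m = ∞
  · obtain ⟨a, ha0, hal⟩ := exists_between (pos_iff_ne_zero.mpr hl0 : (0:ℝ≥0∞) < l)
    have := h a hal
    rw [hm, ENNReal.mul_top (by exact ne_of_gt ha0)] at this
    exact le_trans (le_of_lt (lt_of_lt_of_le hd le_top)) this
  · have hdm : d / m < l := (ENNReal.div_lt_iff (Or.inl hm0) (Or.inl hm)).mpr hd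
    have := h (d / m) hdm
    rwa [ENNReal.div_mul_cancel hm0 hm] at this


lemma integrable_count_of_support (g : ℤ → ℝ) (s : Finset ℤ) (hg : ∀ n ∉ s, g n = 0) :
    Integrable g (Measure.count : Measure ℤ) := by
  refine ⟨(measurable_of_countable g).aestronglyMeasurable, ?_⟩
  rw [HasFiniteIntegral, lintegral_count]
  rw [tsum_eq_sum (f := fun n => ‖g n‖ₑ) (s := s)
    (fun n hn => by simp [hg n hn])]
  exact ENNReal.sum_lt_top.mpr fun n _ => enorm_lt_top

lemma eLpNorm_one_count_eq (g : ℤ → ℝ) (s : Finset ℤ) (hg : ∀ n ∉ s, g n = 0) :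
    eLpNorm g 1 (Measure.count : Measure ℤ) = ∑ n ∈ s, (‖g n‖₊ : ℝ≥0∞) := by
  rw [eLpNorm_one_eq_lintegral_enorm, lintegral_count]
  exact tsum_eq_sum (fun n hn => by simp [hg n hn])

lemma count_ae_iff {P : ℤ → Prop} : (∀ᵐ n ∂(Measure.count : Measure ℤ), P n) ↔ ∀ n, P n := by
  rw [ae_iff, Measure.count_eq_zero_iff]
  constructor
  · intro h n
    by_contra hn
    exact absurd h (Set.Nonempty.ne_empty ⟨n, hn⟩)
  · intro h
    simp [h]

/-- The main transference step for the weak-type (1,1) constant. -/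
theorem weak_transfer [Countable ι] (F : WF ι) (μ : Measure Y) (T : Equiv.Perm Y)
    (hT : MeasurePreserving (⇑T) μ μ) (hTs : Measurable (⇑T.symm)) :
    weakConst μ (F.M T) ≤ weakConst (Measure.count : Measure ℤ) (F.M shiftZ) := by
  refine sInf_le_sInf ?_
  rintro C hC f hf l
  have hTn := mp_zpow hT hTs (μ := μ)
  obtain ⟨ft, hmeas, hfe⟩ : ∃ g : Y → ℝ, Measurable g ∧ f =ᵐ[μ] g :=
    ⟨hf.1.mk f, hf.1.stronglyMeasurable_mk.measurable, hf.1.ae_eq_mk⟩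
  have horb : ∀ᵐ x ∂μ, ∀ n : ℤ, f ((T ^ n) x) = ft ((T ^ n) x) := by
    rw [ae_all_iff]
    exact fun n => hfe.comp_tendsto (hTn n).quasiMeasurePreserving.tendsto_ae
  have hMae : F.M T f =ᵐ[μ] F.M T ft := by
    refine horb.mono fun x hx => ?_
    unfold WF.M
    exact iSup_congr fun i => by rw [Finset.sum_congr rfl fun n _ => hx n]
  have hset : μ {x | l ≤ F.M T f x} = μ {x | l ≤ F.M T ft x} :=
    measure_congr (by filter_upwards [hMae] with x hx; exact congrArg (fun t => l ≤ t) hx)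
  rw [hset, eLpNorm_congr_ae hfe]
  have hfi : Integrable ft μ := hf.congr hfe
  -- Step A : the truncated maximal operator satisfies the weak bound
  have hMtrMeas : ∀ J : ℕ, Measurable (F.Mtr T J ft) :=
    fun J => measurable_Mtr F T (fun n => (hTn n).measurable) hmeas J
  have stepA : ∀ (J : ℕ) (lam : ℝ≥0∞), lam ≠ ∞ →
      lam * μ {x | lam ≤ F.Mtr T J ft x} ≤ C * eLpNorm ft 1 μ := by
    intro J lam hlam
    set E := {x | lam ≤ F.Mtr T J ft x} with hEdef
    have hE : MeasurableSet E := measurableSet_le measurable_const (hMtrMeas J)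
    refine crux J ?_
    intro K
    set R : Finset ℤ := Finset.Icc (-(K + J : ℕ) : ℤ) ((K + J : ℕ) : ℤ) with hR
    have key : ∀ x : Y,
        lam * (((Finset.Icc (-(K : ℤ)) (K : ℤ)).filter
            (fun m => lam ≤ F.Mtr T J ft ((T ^ m) x))).card : ℝ≥0∞)
          ≤ C * ∑ n ∈ R, (‖ft ((T ^ n) x)‖₊ : ℝ≥0∞) := by
      intro x
      set g : ℤ → ℝ := fun n => if n ∈ R then ft ((T ^ n) x) else 0 with hg
      have hgsupp : ∀ n ∉ R, g n = 0 := fun n hn => by simp [hg, hn]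
      have hgi : Integrable g Measure.count := integrable_count_of_support g R hgsupp
      have hZ := hC g hgi lam
      have hsub : (((Finset.Icc (-(K : ℤ)) (K : ℤ)).filter
            (fun m => lam ≤ F.Mtr T J ft ((T ^ m) x))) : Set ℤ)
          ⊆ {m | lam ≤ F.M shiftZ g m} := by
        intro m hm
        simp only [Finset.coe_filter, Set.mem_setOf_eq, Finset.mem_Icc] at hm
        obtain ⟨⟨h1, h2⟩, hlam'⟩ := hm
        have e1 : F.Mtr T J ft ((T ^ m) x) = F.Mtr shiftZ J g m := by
          rw [Mtr_shift]
          refine (Mtr_congr F J g _ m fun n hn1 hn2 => ?_).symm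
          have hnR : n ∈ R := by rw [hR, Finset.mem_Icc]; push_cast; omega
          simp [hg, hnR]
        exact Set.mem_setOf_eq ▸ le_trans (e1 ▸ hlam') (Mtr_le_M F shiftZ J g m)
      calc lam * (((Finset.Icc (-(K : ℤ)) (K : ℤ)).filter
            (fun m => lam ≤ F.Mtr T J ft ((T ^ m) x))).card : ℝ≥0∞)
          = lam * Measure.count (((Finset.Icc (-(K : ℤ)) (K : ℤ)).filter
            (fun m => lam ≤ F.Mtr T J ft ((T ^ m) x))) : Set ℤ) := by
            rw [Measure.count_apply_finset]
        _ ≤ lam * Measure.count {m | lam ≤ F.M shiftZ g m} := by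
            exact mul_le_mul_right (measure_mono hsub) lam
        _ ≤ C * eLpNorm g 1 Measure.count := hZ
        _ = C * ∑ n ∈ R, (‖g n‖₊ : ℝ≥0∞) := by rw [eLpNorm_one_count_eq g R hgsupp]
        _ = C * ∑ n ∈ R, (‖ft ((T ^ n) x)‖₊ : ℝ≥0∞) := by
            congr 1
            exact Finset.sum_congr rfl fun n hn => by simp [hg, hn]
    -- integrate `key` over `x`
    have hEm : ∀ m : ℤ, MeasurableSet ((⇑(T ^ m)) ⁻¹' E) := fun m => (hTn m).measurable hE
    have hpre : ∀ m : ℤ, {x : Y | lam ≤ F.Mtr T J ft ((T ^ m) x)} = (⇑(T ^ m)) ⁻¹' E := by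
      intro m; rfl
    have hcard : ∀ x : Y, (((Finset.Icc (-(K : ℤ)) (K : ℤ)).filter
          (fun m => lam ≤ F.Mtr T J ft ((T ^ m) x))).card : ℝ≥0∞)
        = ∑ m ∈ Finset.Icc (-(K : ℤ)) (K : ℤ),
            Set.indicator ((⇑(T ^ m)) ⁻¹' E) (1 : Y → ℝ≥0∞) x := by
      intro x
      rw [Finset.card_filter, Nat.cast_sum]
      refine Finset.sum_congr rfl fun m _ => ?_
      by_cases hx : lam ≤ F.Mtr T J ft ((T ^ m) x)
      · rw [Set.indicator_of_mem (show x ∈ (⇑(T ^ m)) ⁻¹' E from hx), if_pos hx]; simp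
      · rw [Set.indicator_of_notMem (show x ∉ (⇑(T ^ m)) ⁻¹' E from hx), if_neg hx]; simp
    have lhs_int : ∫⁻ x, lam * (((Finset.Icc (-(K : ℤ)) (K : ℤ)).filter
          (fun m => lam ≤ F.Mtr T J ft ((T ^ m) x))).card : ℝ≥0∞) ∂μ
        = ((2 * K + 1 : ℕ) : ℝ≥0∞) * (lam * μ E) := by
      simp_rw [hcard]
      rw [lintegral_const_mul lam (by
        exact Finset.measurable_sum _ fun m _ => measurable_one.indicator (hEm m))]
      rw [lintegral_finset_sum _ fun m _ => measurable_one.indicator (hEm m)]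
      have h1 : ∀ m ∈ Finset.Icc (-(K : ℤ)) (K : ℤ),
          ∫⁻ x, Set.indicator ((⇑(T ^ m)) ⁻¹' E) (1 : Y → ℝ≥0∞) x ∂μ = μ E := by
        intro m _
        rw [lintegral_indicator_one (hEm m)]
        exact (hTn m).measure_preimage hE.nullMeasurableSet
      rw [Finset.sum_congr rfl h1, Finset.sum_const, Int.card_Icc]
      have h2 : ((K : ℤ) + 1 - -(K : ℤ)).toNat = 2 * K + 1 := by omega
      rw [h2, nsmul_eq_mul]
      ring
    have rhs_int : ∫⁻ x, C * ∑ n ∈ R, (‖ft ((T ^ n) x)‖₊ : ℝ≥0∞) ∂μ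
        = ((2 * K + 2 * J + 1 : ℕ) : ℝ≥0∞) * (C * eLpNorm ft 1 μ) := by
      have hmn : ∀ n : ℤ, Measurable fun x : Y => (‖ft ((T ^ n) x)‖₊ : ℝ≥0∞) :=
        fun n => ((hmeas.comp (hTn n).measurable).nnnorm).coe_nnreal_ennreal
      rw [lintegral_const_mul C (Finset.measurable_sum _ fun n _ => hmn n)]
      rw [lintegral_finset_sum _ fun n _ => hmn n]
      have h1 : ∀ n ∈ R, ∫⁻ x, (‖ft ((T ^ n) x)‖₊ : ℝ≥0∞) ∂μ = eLpNorm ft 1 μ := by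
        intro n _
        rw [eLpNorm_one_eq_lintegral_enorm]
        exact (hTn n).lintegral_comp hmeas.nnnorm.coe_nnreal_ennreal
      rw [Finset.sum_congr rfl h1, Finset.sum_const, hR, Int.card_Icc]
      have h2 : (((K + J : ℕ) : ℤ) + 1 - -((K + J : ℕ) : ℤ)).toNat = 2 * K + 2 * J + 1 := by
        omega
      rw [h2, nsmul_eq_mul]
      ring
    calc ((2 * K + 1 : ℕ) : ℝ≥0∞) * (lam * μ E)
        = ∫⁻ x, lam * (((Finset.Icc (-(K : ℤ)) (K : ℤ)).filter
            (fun m => lam ≤ F.Mtr T J ft ((T ^ m) x))).card : ℝ≥0∞) ∂μ := lhs_int.symm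
      _ ≤ ∫⁻ x, C * ∑ n ∈ R, (‖ft ((T ^ n) x)‖₊ : ℝ≥0∞) ∂μ := lintegral_mono key
      _ = ((2 * K + 2 * J + 1 : ℕ) : ℝ≥0∞) * (C * eLpNorm ft 1 μ) := rhs_int
  -- Step B : pass to the limit
  refine mul_le_of_forall_lt fun a ha => ?_
  have hatop : a ≠ ∞ := ne_top_of_lt ha
  set A : ℕ → Set Y := fun J => {x | a ≤ F.Mtr T J ft x} with hA
  have hAmono : Monotone A := fun J J' hJ x hx => le_trans hx (Mtr_mono F T hJ ft x)
  have hsub : {x | l ≤ F.M T ft x} ⊆ ⋃ J, A J := by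
    intro x hx
    have h1 : a < F.M T ft x := lt_of_lt_of_le ha hx
    rw [← iSup_Mtr F T ft x] at h1
    obtain ⟨J, hJ⟩ := lt_iSup_iff.mp h1
    exact Set.mem_iUnion.mpr ⟨J, hJ.le⟩
  calc a * μ {x | l ≤ F.M T ft x}
      ≤ a * μ (⋃ J, A J) := mul_le_mul_right (measure_mono hsub) a
    _ = a * ⨆ J, μ (A J) := by rw [hAmono.directed_le.measure_iUnion]
    _ = ⨆ J, a * μ (A J) := ENNReal.mul_iSup a _
    _ ≤ C * eLpNorm ft 1 μ := iSup_le fun J => stepA J a hatop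


lemma rpow_iSup {q : ℝ} (hq : 0 < q) (a : ℕ → ℝ≥0∞) : (⨆ J, a J) ^ q = ⨆ J, a J ^ q := by
  refine le_antisymm ?_ (iSup_le fun J => ENNReal.rpow_le_rpow (le_iSup a J) hq.le)
  have h1 : ∀ J, a J ≤ (⨆ J, a J ^ q) ^ (1 / q) := by
    intro J
    have h2 : a J ^ q ≤ ⨆ J, a J ^ q := le_iSup (fun J => a J ^ q) J
    have h3 := ENNReal.rpow_le_rpow h2 (by positivity : (0:ℝ) ≤ 1 / q)
    rwa [← ENNReal.rpow_mul, mul_one_div_cancel hq.ne', ENNReal.rpow_one] at h3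
  have h4 := ENNReal.rpow_le_rpow (iSup_le h1) hq.le
  rwa [← ENNReal.rpow_mul, one_div_mul_cancel hq.ne', ENNReal.rpow_one] at h4

/-- The main transference step for the strong type (q,q) constant. -/
theorem strong_transfer [Countable ι] (F : WF ι) (μ : Measure Y) (T : Equiv.Perm Y)
    (hT : MeasurePreserving (⇑T) μ μ) (hTs : Measurable (⇑T.symm))
    {q : ℝ} (hq : 0 < q) :
    strongConst μ (F.M T) q ≤ strongConst (Measure.count : Measure ℤ) (F.M shiftZ) q := by
  refine sInf_le_sInf ?_
  rintro C hC f hf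
  have hTn := mp_zpow hT hTs (μ := μ)
  obtain ⟨ft, hmeas, hfe⟩ : ∃ g : Y → ℝ, Measurable g ∧ f =ᵐ[μ] g :=
    ⟨hf.1.mk f, hf.1.stronglyMeasurable_mk.measurable, hf.1.ae_eq_mk⟩
  have horb : ∀ᵐ x ∂μ, ∀ n : ℤ, f ((T ^ n) x) = ft ((T ^ n) x) := by
    rw [ae_all_iff]
    exact fun n => hfe.comp_tendsto (hTn n).quasiMeasurePreserving.tendsto_ae
  have hMae : F.M T f =ᵐ[μ] F.M T ft := by
    refine horb.mono fun x hx => ?_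
    unfold WF.M
    exact iSup_congr fun i => by rw [Finset.sum_congr rfl fun n _ => hx n]
  have hint : ∫⁻ x, F.M T f x ^ q ∂μ = ∫⁻ x, F.M T ft x ^ q ∂μ :=
    lintegral_congr_ae (hMae.mono fun x hx => congrArg (· ^ q) hx)
  rw [hint, eLpNorm_congr_ae hfe]
  have hMtrMeas : ∀ J : ℕ, Measurable (F.Mtr T J ft) :=
    fun J => measurable_Mtr F T (fun n => (hTn n).measurable) hmeas J
  have hq0 : ENNReal.ofReal q ≠ 0 := by simp [hq, ENNReal.ofReal_eq_zero, not_le]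
  have hqT : ENNReal.ofReal q ≠ ∞ := ENNReal.ofReal_ne_top
  -- the ℤ-side inequality, in powered form, for finitely supported functions
  have hCpow : ∀ (g : ℤ → ℝ) (s : Finset ℤ), (∀ n ∉ s, g n = 0) →
      ∫⁻ m, F.M shiftZ g m ^ q ∂(Measure.count : Measure ℤ)
        ≤ C ^ q * ∑ n ∈ s, (‖g n‖₊ : ℝ≥0∞) ^ q := by
    intro g s hgs
    have htsum : ∑' n : ℤ, (‖g n‖₊ : ℝ≥0∞) ^ q = ∑ n ∈ s, (‖g n‖₊ : ℝ≥0∞) ^ q :=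
      tsum_eq_sum (fun n hn => by
        rw [hgs n hn]; simp [ENNReal.zero_rpow_of_pos hq])
    have hsnorm : eLpNorm g (ENNReal.ofReal q) Measure.count
        = (∑ n ∈ s, (‖g n‖₊ : ℝ≥0∞) ^ q) ^ (1 / q) := by
      rw [eLpNorm_eq_lintegral_rpow_enorm_toReal hq0 hqT, ENNReal.toReal_ofReal hq.le,
        lintegral_count]
      simp only [enorm_eq_nnnorm]
      rw [htsum]
    have hmem : MemLp g (ENNReal.ofReal q) Measure.count := by
      refine ⟨(measurable_of_countable g).aestronglyMeasurable, ?_⟩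
      rw [hsnorm]
      exact ENNReal.rpow_lt_top_of_nonneg (by positivity)
        (ENNReal.sum_lt_top.mpr fun n _ =>
          ENNReal.rpow_lt_top_of_nonneg hq.le ENNReal.coe_ne_top).ne
    have h1 := hC g hmem
    have h2 := ENNReal.rpow_le_rpow h1 hq.le
    rw [← ENNReal.rpow_mul, one_div_mul_cancel hq.ne', ENNReal.rpow_one,
      ENNReal.mul_rpow_of_nonneg _ _ hq.le, hsnorm, ← ENNReal.rpow_mul,
      one_div_mul_cancel hq.ne', ENNReal.rpow_one] at h2
    exact h2
  -- Step A
  have stepA : ∀ J : ℕ, ∫⁻ x, F.Mtr T J ft x ^ q ∂μ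
      ≤ C ^ q * ∫⁻ x, (‖ft x‖₊ : ℝ≥0∞) ^ q ∂μ := by
    intro J
    refine crux J ?_
    intro K
    set R : Finset ℤ := Finset.Icc (-(K + J : ℕ) : ℤ) ((K + J : ℕ) : ℤ) with hR
    have key : ∀ x : Y, ∑ m ∈ Finset.Icc (-(K : ℤ)) (K : ℤ), F.Mtr T J ft ((T ^ m) x) ^ q
        ≤ C ^ q * ∑ n ∈ R, (‖ft ((T ^ n) x)‖₊ : ℝ≥0∞) ^ q := by
      intro x
      set g : ℤ → ℝ := fun n => if n ∈ R then ft ((T ^ n) x) else 0 with hg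
      have hgsupp : ∀ n ∉ R, g n = 0 := fun n hn => by simp [hg, hn]
      calc ∑ m ∈ Finset.Icc (-(K : ℤ)) (K : ℤ), F.Mtr T J ft ((T ^ m) x) ^ q
          ≤ ∑ m ∈ Finset.Icc (-(K : ℤ)) (K : ℤ), F.M shiftZ g m ^ q := by
            refine Finset.sum_le_sum fun m hm => ?_
            rw [Finset.mem_Icc] at hm
            have e1 : F.Mtr T J ft ((T ^ m) x) = F.Mtr shiftZ J g m := by
              rw [Mtr_shift]
              refine (Mtr_congr F J g _ m fun n hn1 hn2 => ?_).symm
              have hnR : n ∈ R := by rw [hR, Finset.mem_Icc]; push_cast; omega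
              simp [hg, hnR]
            rw [e1]
            exact ENNReal.rpow_le_rpow (Mtr_le_M F shiftZ J g m) hq.le
        _ ≤ ∑' m : ℤ, F.M shiftZ g m ^ q := ENNReal.sum_le_tsum _
        _ = ∫⁻ m, F.M shiftZ g m ^ q ∂Measure.count := (lintegral_count _).symm
        _ ≤ C ^ q * ∑ n ∈ R, (‖g n‖₊ : ℝ≥0∞) ^ q := hCpow g R hgsupp
        _ = C ^ q * ∑ n ∈ R, (‖ft ((T ^ n) x)‖₊ : ℝ≥0∞) ^ q := by
            congr 1
            exact Finset.sum_congr rfl fun n hn => by simp [hg, hn]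
    have hmm : ∀ m : ℤ, Measurable fun x : Y => F.Mtr T J ft ((T ^ m) x) ^ q :=
      fun m => ((hMtrMeas J).comp (hTn m).measurable).pow_const q
    have lhs_int : ∫⁻ x, ∑ m ∈ Finset.Icc (-(K : ℤ)) (K : ℤ),
          F.Mtr T J ft ((T ^ m) x) ^ q ∂μ
        = ((2 * K + 1 : ℕ) : ℝ≥0∞) * ∫⁻ x, F.Mtr T J ft x ^ q ∂μ := by
      rw [lintegral_finset_sum _ fun m _ => hmm m]
      have h1 : ∀ m ∈ Finset.Icc (-(K : ℤ)) (K : ℤ),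
          ∫⁻ x, F.Mtr T J ft ((T ^ m) x) ^ q ∂μ = ∫⁻ x, F.Mtr T J ft x ^ q ∂μ :=
        fun m _ => (hTn m).lintegral_comp ((hMtrMeas J).pow_const q)
      rw [Finset.sum_congr rfl h1, Finset.sum_const, Int.card_Icc]
      have h2 : ((K : ℤ) + 1 - -(K : ℤ)).toNat = 2 * K + 1 := by omega
      rw [h2, nsmul_eq_mul]
    have hmn : ∀ n : ℤ, Measurable fun x : Y => (‖ft ((T ^ n) x)‖₊ : ℝ≥0∞) ^ q :=
      fun n => (((hmeas.comp (hTn n).measurable).nnnorm).coe_nnreal_ennreal).pow_const q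
    have rhs_int : ∫⁻ x, C ^ q * ∑ n ∈ R, (‖ft ((T ^ n) x)‖₊ : ℝ≥0∞) ^ q ∂μ
        = ((2 * K + 2 * J + 1 : ℕ) : ℝ≥0∞) * (C ^ q * ∫⁻ x, (‖ft x‖₊ : ℝ≥0∞) ^ q ∂μ) := by
      rw [lintegral_const_mul _ (Finset.measurable_sum _ fun n _ => hmn n)]
      rw [lintegral_finset_sum _ fun n _ => hmn n]
      have h1 : ∀ n ∈ R, ∫⁻ x, (‖ft ((T ^ n) x)‖₊ : ℝ≥0∞) ^ q ∂μ
          = ∫⁻ x, (‖ft x‖₊ : ℝ≥0∞) ^ q ∂μ :=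
        fun n _ => (hTn n).lintegral_comp ((hmeas.nnnorm.coe_nnreal_ennreal).pow_const q)
      rw [Finset.sum_congr rfl h1, Finset.sum_const, hR, Int.card_Icc]
      have h2 : (((K + J : ℕ) : ℤ) + 1 - -((K + J : ℕ) : ℤ)).toNat = 2 * K + 2 * J + 1 := by
        omega
      rw [h2, nsmul_eq_mul]
      ring
    calc ((2 * K + 1 : ℕ) : ℝ≥0∞) * ∫⁻ x, F.Mtr T J ft x ^ q ∂μ
        = ∫⁻ x, ∑ m ∈ Finset.Icc (-(K : ℤ)) (K : ℤ), F.Mtr T J ft ((T ^ m) x) ^ q ∂μ :=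
          lhs_int.symm
      _ ≤ ∫⁻ x, C ^ q * ∑ n ∈ R, (‖ft ((T ^ n) x)‖₊ : ℝ≥0∞) ^ q ∂μ := lintegral_mono key
      _ = ((2 * K + 2 * J + 1 : ℕ) : ℝ≥0∞) * (C ^ q * ∫⁻ x, (‖ft x‖₊ : ℝ≥0∞) ^ q ∂μ) :=
          rhs_int
  -- Step B : monotone convergence in J
  have stepB : ∫⁻ x, F.M T ft x ^ q ∂μ ≤ C ^ q * ∫⁻ x, (‖ft x‖₊ : ℝ≥0∞) ^ q ∂μ := by
    have hpt : ∀ x, F.M T ft x ^ q = ⨆ J, F.Mtr T J ft x ^ q := by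
      intro x
      rw [← iSup_Mtr F T ft x, rpow_iSup hq]
    have hmono : Monotone fun J => fun x => F.Mtr T J ft x ^ q := fun J J' h x =>
      ENNReal.rpow_le_rpow (Mtr_mono F T h ft x) hq.le
    calc ∫⁻ x, F.M T ft x ^ q ∂μ
        = ∫⁻ x, ⨆ J, F.Mtr T J ft x ^ q ∂μ := lintegral_congr hpt
      _ = ⨆ J, ∫⁻ x, F.Mtr T J ft x ^ q ∂μ :=
          lintegral_iSup (fun J => (hMtrMeas J).pow_const q) hmono
      _ ≤ C ^ q * ∫⁻ x, (‖ft x‖₊ : ℝ≥0∞) ^ q ∂μ := iSup_le stepA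
  -- conclude
  have h5 := ENNReal.rpow_le_rpow stepB (by positivity : (0:ℝ) ≤ 1 / q)
  rw [ENNReal.mul_rpow_of_nonneg _ _ (by positivity : (0:ℝ) ≤ 1 / q),
    ← ENNReal.rpow_mul, mul_one_div_cancel hq.ne', ENNReal.rpow_one] at h5
  refine le_trans h5 ?_
  rw [eLpNorm_eq_lintegral_rpow_enorm_toReal hq0 hqT, ENNReal.toReal_ofReal hq.le]
  rfl

/-- The main transference step for the `L^∞` constant. -/
theorem sup_transfer [Countable ι] (F : WF ι) (μ : Measure Y) (T : Equiv.Perm Y)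
    (hT : MeasurePreserving (⇑T) μ μ) (hTs : Measurable (⇑T.symm)) :
    supConst μ (F.M T) ≤ supConst (Measure.count : Measure ℤ) (F.M shiftZ) := by
  refine sInf_le_sInf ?_
  rintro C hC f hf
  have hC1 : 1 ≤ C := by
    set g : ℤ → ℝ := fun n => if n = 0 then 1 else 0 with hg
    have hgb : ∀ n, (‖g n‖₊ : ℝ≥0∞) ≤ 1 := by
      intro n; by_cases h : n = 0 <;> simp [hg, h]
    have hnorm : eLpNorm g ∞ Measure.count ≤ 1 := by
      rw [eLpNorm_exponent_top, eLpNormEssSup]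
      exact essSup_le_of_ae_le 1 (Eventually.of_forall hgb)
    have hgm : MemLp g ∞ Measure.count :=
      ⟨(measurable_of_countable g).aestronglyMeasurable,
        lt_of_le_of_lt hnorm ENNReal.one_lt_top⟩
    have h1 : (1 : ℝ≥0∞) ≤ F.M shiftZ g 0 := by
      have he : (‖(∑ n ∈ F.W F.i0, g ((shiftZ ^ n) 0)) / F.c F.i0‖₊ : ℝ≥0∞) = 1 := by
        rw [F.hW0, F.hc0, Finset.sum_singleton, shiftZ_zpow]
        norm_num [hg]
      calc (1 : ℝ≥0∞) = (‖(∑ n ∈ F.W F.i0, g ((shiftZ ^ n) 0)) / F.c F.i0‖₊ : ℝ≥0∞) := he.symm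
        _ ≤ F.M shiftZ g 0 := le_iSup
            (fun i => (‖(∑ n ∈ F.W i, g ((shiftZ ^ n) 0)) / F.c i‖₊ : ℝ≥0∞)) F.i0
    have h3 : F.M shiftZ g 0 ≤ essSup (F.M shiftZ g) Measure.count :=
      (count_ae_iff.mp (ae_le_essSup (F.M shiftZ g))) 0
    calc (1 : ℝ≥0∞) ≤ essSup (F.M shiftZ g) Measure.count := le_trans h1 h3
      _ ≤ C * eLpNorm g ∞ Measure.count := hC g hgm
      _ ≤ C * 1 := mul_le_mul_right hnorm C
      _ = C := mul_one C
  have hTn := mp_zpow hT hTs (μ := μ)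
  set a := eLpNorm f ∞ μ with ha
  have hae : ∀ᵐ x ∂μ, (‖f x‖₊ : ℝ≥0∞) ≤ a := by
    rw [ha, eLpNorm_exponent_top, eLpNormEssSup]
    exact ENNReal.ae_le_essSup _
  have horb : ∀ᵐ x ∂μ, ∀ n : ℤ, (‖f ((T ^ n) x)‖₊ : ℝ≥0∞) ≤ a := by
    rw [ae_all_iff]
    exact fun n => ((hTn n).quasiMeasurePreserving.tendsto_ae).eventually hae
  have hbound : ∀ᵐ x ∂μ, F.M T f x ≤ a := by
    filter_upwards [horb] with x hx
    refine iSup_le fun i => ?_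
    have hci := F.hc i
    have hcne : (‖F.c i‖₊ : ℝ≥0∞) ≠ 0 := by
      simp only [ne_eq, ENNReal.coe_eq_zero, nnnorm_eq_zero]
      exact hci.ne'
    have h5 : (‖(∑ n ∈ F.W i, f ((T ^ n) x)) / F.c i‖₊ : ℝ≥0∞)
        = (‖∑ n ∈ F.W i, f ((T ^ n) x)‖₊ : ℝ≥0∞) / (‖F.c i‖₊ : ℝ≥0∞) := by
      rw [nnnorm_div, ENNReal.coe_div (by simpa using hci.ne')]
    rw [h5, ENNReal.div_le_iff hcne ENNReal.coe_ne_top]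
    have h6 : (‖∑ n ∈ F.W i, f ((T ^ n) x)‖₊ : ℝ≥0∞)
        ≤ ∑ n ∈ F.W i, (‖f ((T ^ n) x)‖₊ : ℝ≥0∞) := by
      rw [← ENNReal.coe_finset_sum]
      exact ENNReal.coe_le_coe.mpr (nnnorm_sum_le _ _)
    have h7 : ∑ n ∈ F.W i, (‖f ((T ^ n) x)‖₊ : ℝ≥0∞) ≤ ((F.W i).card : ℝ≥0∞) * a := by
      calc ∑ n ∈ F.W i, (‖f ((T ^ n) x)‖₊ : ℝ≥0∞) ≤ ∑ _n ∈ F.W i, a :=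
            Finset.sum_le_sum fun n _ => hx n
        _ = ((F.W i).card : ℝ≥0∞) * a := by rw [Finset.sum_const, nsmul_eq_mul]
    have h8 : ((F.W i).card : ℝ≥0∞) ≤ (‖F.c i‖₊ : ℝ≥0∞) := by
      rw [← enorm_eq_nnnorm, Real.enorm_eq_ofReal hci.le, ← ENNReal.ofReal_natCast]
      exact ENNReal.ofReal_le_ofReal (F.hcard i)
    calc (‖∑ n ∈ F.W i, f ((T ^ n) x)‖₊ : ℝ≥0∞)
        ≤ ((F.W i).card : ℝ≥0∞) * a := le_trans h6 h7
      _ ≤ (‖F.c i‖₊ : ℝ≥0∞) * a := mul_le_mul_left h8 a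
      _ = a * (‖F.c i‖₊ : ℝ≥0∞) := mul_comm _ _
  calc essSup (F.M T f) μ ≤ a := essSup_le_of_ae_le a hbound
    _ = 1 * a := (one_mul a).symm
    _ ≤ C * eLpNorm f ∞ μ := mul_le_mul_left hC1 a

/-- Transference for `bestConst`, for any `p ∈ [1,∞]`. -/
theorem best_transfer [Countable ι] (F : WF ι) (μ : Measure Y) (T : Equiv.Perm Y)
    (hT : MeasurePreserving (⇑T) μ μ) (hTs : Measurable (⇑T.symm))
    (p : ℝ≥0∞) (hp : 1 ≤ p) :
    bestConst μ (F.M T) p ≤ bestConst (Measure.count : Measure ℤ) (F.M shiftZ) p := by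
  unfold bestConst
  split_ifs with h1 h2
  · exact weak_transfer F μ T hT hTs
  · exact sup_transfer F μ T hT hTs
  · refine strong_transfer F μ T hT hTs ?_
    exact ENNReal.toReal_pos (by intro h0; rw [h0] at hp; exact absurd hp (by simp)) h2


/-- Window family for the one-sided maximal operator. -/
def F1 : WF ℕ where
  W := fun N => Finset.Icc 0 (N : ℤ)
  c := fun N => (N : ℝ) + 1
  hc := fun N => by positivity
  hcard := fun N => by
    rw [Int.card_Icc]
    have h : ((N : ℤ) + 1 - 0).toNat = N + 1 := by omega
    rw [h]; push_cast; linarith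
  i0 := 0
  hW0 := by simp
  hc0 := by norm_num
  S := fun J => Finset.range (J + 1)
  Smono := fun J J' h => Finset.range_subset_range.mpr (by omega)
  Sexh := fun N => ⟨N, Finset.self_mem_range_succ N⟩
  Sbound := fun J N hN => by
    rw [Finset.mem_range] at hN
    exact Finset.Icc_subset_Icc (by omega) (by omega)

/-- Window family for the centered maximal operator. -/
def F2 : WF ℕ where
  W := fun N => Finset.Icc (-(N : ℤ)) (N : ℤ)
  c := fun N => 2 * (N : ℝ) + 1
  hc := fun N => by positivity
  hcard := fun N => by
    rw [Int.card_Icc]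
    have h : ((N : ℤ) + 1 - -(N : ℤ)).toNat = 2 * N + 1 := by omega
    rw [h]; push_cast; linarith
  i0 := 0
  hW0 := by norm_num
  hc0 := by norm_num
  S := fun J => Finset.range (J + 1)
  Smono := fun J J' h => Finset.range_subset_range.mpr (by omega)
  Sexh := fun N => ⟨N, Finset.self_mem_range_succ N⟩
  Sbound := fun J N hN => by
    rw [Finset.mem_range] at hN
    exact Finset.Icc_subset_Icc (by omega) (by omega)

/-- Window family for the uncentered maximal operator. -/
def F3 : WF (ℕ × ℕ) where
  W := fun p => Finset.Icc (-(p.1 : ℤ)) (p.2 : ℤ)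
  c := fun p => (p.1 : ℝ) + (p.2 : ℝ) + 1
  hc := fun p => by positivity
  hcard := fun p => by
    rw [Int.card_Icc]
    have h : ((p.2 : ℤ) + 1 - -(p.1 : ℤ)).toNat = p.1 + p.2 + 1 := by omega
    rw [h]; push_cast; linarith
  i0 := (0, 0)
  hW0 := by norm_num
  hc0 := by norm_num
  S := fun J => Finset.range (J + 1) ×ˢ Finset.range (J + 1)
  Smono := fun J J' h =>
    Finset.product_subset_product (Finset.range_subset_range.mpr (by omega))
      (Finset.range_subset_range.mpr (by omega))
  Sexh := fun p => ⟨max p.1 p.2, Finset.mem_product.mpr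
    ⟨Finset.mem_range.mpr (by omega), Finset.mem_range.mpr (by omega)⟩⟩
  Sbound := fun J p hp => by
    rw [Finset.mem_product, Finset.mem_range, Finset.mem_range] at hp
    exact Finset.Icc_subset_Icc (by omega) (by omega)

lemma maxOS_eq (T : Equiv.Perm Y) : maxOS T = F1.M T := by
  funext f x
  refine iSup_congr fun N => ?_
  have hmap : Finset.Icc (0 : ℤ) (N : ℤ)
      = Finset.map ⟨(Nat.cast : ℕ → ℤ), Nat.cast_injective⟩ (Finset.range (N + 1)) := by
    ext a
    simp only [Finset.mem_Icc, Finset.mem_map, Finset.mem_range, Function.Embedding.coeFn_mk]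
    constructor
    · rintro ⟨h0, hN⟩; exact ⟨a.toNat, by omega, by omega⟩
    · rintro ⟨b, hb, rfl⟩; omega
  have hsum : (∑ n ∈ Finset.range (N + 1), f ((T ^ n) x))
      = ∑ n ∈ Finset.Icc (0 : ℤ) (N : ℤ), f ((T ^ n) x) := by
    rw [hmap, Finset.sum_map]
    refine Finset.sum_congr rfl fun n _ => ?_
    simp only [Function.Embedding.coeFn_mk]
    rw [zpow_natCast]
  rw [hsum]
  rfl

lemma maxC_eq (T : Equiv.Perm Y) : maxC T = F2.M T := rfl

lemma maxU_eq (T : Equiv.Perm Y) : maxU T = F3.M T := by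
  funext f x
  exact (iSup_prod (f := fun p : ℕ × ℕ =>
    (‖(∑ n ∈ Finset.Icc (-(p.1 : ℤ)) (p.2 : ℤ), f ((T ^ n) x))
      / ((p.1 : ℝ) + (p.2 : ℝ) + 1)‖₊ : ℝ≥0∞))).symm


end MaxTransfer

/-- Proposition 2 of the paper (transference for the three maximal operators):
for every `p ∈ [1,∞]`, the best constants on any nontrivial σ-finite system with an invertible
bimeasurable measure-preserving transformation are dominated by those on the canonical
system `X₁ = ℤ`. -/
theorem maximal_transference {X : Type*} [MeasurableSpace X] (μ : Measure X) [SigmaFinite μ]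
    (hX : NontrivialSpace μ) (T : Equiv.Perm X)
    (hT : MeasurePreserving (⇑T) μ μ) (hTs : Measurable (⇑T.symm))
    (p : ℝ≥0∞) (hp : 1 ≤ p) :
    bestConst μ (maxOS T) p ≤ bestConst (Measure.count : Measure ℤ) (maxOS shiftZ) p ∧
    bestConst μ (maxC T) p ≤ bestConst (Measure.count : Measure ℤ) (maxC shiftZ) p ∧
    bestConst μ (maxU T) p ≤ bestConst (Measure.count : Measure ℤ) (maxU shiftZ) p := by
  refine ⟨?_, ?_, ?_⟩
  · rw [MaxTransfer.maxOS_eq T, MaxTransfer.maxOS_eq shiftZ]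
    exact MaxTransfer.best_transfer MaxTransfer.F1 μ T hT hTs p hp
  · rw [MaxTransfer.maxC_eq T, MaxTransfer.maxC_eq shiftZ]
    exact MaxTransfer.best_transfer MaxTransfer.F2 μ T hT hTs p hp
  · rw [MaxTransfer.maxU_eq T, MaxTransfer.maxU_eq shiftZ]
    exact MaxTransfer.best_transfer MaxTransfer.F3 μ T hT hTs p hp

end
end

section
/- The best constant in the weak type (1,1) inequality for the one-sided maximal operator on the integers equals 1: C⁻(X₁, 1) = 1. In particular, for every f ∈ ℓ¹(ℤ) and every λ > 0, one has λ · #{l ∈ ℤ : M⁻f(l) ≥ λ} ≤ ‖f‖_{ℓ¹}. -/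
open MeasureTheory ENNReal Filter

noncomputable section

variable {X : Type*} [MeasurableSpace X]

private lemma shiftZ_pow_apply (n : ℕ) (l : ℤ) : (shiftZ ^ n) l = l + n := by
  induction n generalizing l with
  | zero => simp
  | succ n ih =>
    have h1 : (shiftZ ^ (n+1)) l = (shiftZ ^ n) (shiftZ l) := by rw [pow_succ]; rfl
    have h2 : shiftZ l = l + 1 := rfl
    rw [h1, h2, ih]
    push_cast
    ring
private lemma Ico_split (g : ℤ → ℝ) (a b c : ℤ) (hab : a ≤ b) (hbc : b ≤ c) :
    ∑ j ∈ Finset.Ico a b, g j + ∑ j ∈ Finset.Ico b c, g j = ∑ j ∈ Finset.Ico a c, g j := by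
  rw [← Finset.sum_union (Finset.Ico_disjoint_Ico_consecutive a b c),
    Finset.Ico_union_Ico_eq_Ico hab hbc]

private lemma sum_shift_eq (h : ℤ → ℝ) (l : ℤ) (k : ℕ) :
    ∑ n ∈ Finset.range k, h (l + n) = ∑ j ∈ Finset.Ico l (l + k), h j := by
  induction k with
  | zero => simp
  | succ k ih =>
    rw [Finset.sum_range_succ, ih]
    have h1 : (l + ((k:ℕ)+1 : ℕ) : ℤ) = (l + k) + 1 := by push_cast; ring
    rw [h1, ← Ico_split h l (l + k) (l + k + 1) (by omega) (by omega)]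
    have h2 : Finset.Ico (l + (k:ℤ)) (l + k + 1) = {l + (k:ℤ)} := by
      ext x; simp only [Finset.mem_Ico, Finset.mem_singleton]; omega
    rw [h2, Finset.sum_singleton]

private lemma rising_sun (g : ℤ → ℝ) (lam : ℝ) :
    ∀ (n : ℕ) (S : Finset ℤ), S.card ≤ n →
      (∀ l ∈ S, ∃ m : ℤ, l < m ∧ Finset.Ico l m ⊆ S ∧
        lam * ((m : ℝ) - (l : ℝ)) ≤ ∑ j ∈ Finset.Ico l m, g j) →
      lam * (S.card : ℝ) ≤ ∑ j ∈ S, g j := by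
  intro n
  induction n with
  | zero =>
    intro S hc _
    have h0 : S = ∅ := Finset.card_eq_zero.mp (Nat.le_zero.mp hc)
    subst h0; simp
  | succ n ih =>
    intro S hc hyp
    rcases S.eq_empty_or_nonempty with rfl | hne
    · simp
    obtain ⟨m, hlm, hIsub, hsum⟩ := hyp (S.min' hne) (S.min'_mem hne)
    set l₀ := S.min' hne with hl₀
    set I := Finset.Ico l₀ m with hI
    have hl₀I : l₀ ∈ I := Finset.mem_Ico.mpr ⟨le_refl _, hlm⟩
    set S' := S \ I with hS'
    have hl₀S' : l₀ ∉ S' := fun h => (Finset.mem_sdiff.mp h).2 hl₀I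
    have hcard' : S'.card ≤ n := by
      have h1 : S'.card < S.card :=
        Finset.card_lt_card ⟨Finset.sdiff_subset, fun hsub => hl₀S' (hsub (S.min'_mem hne))⟩
      omega
    have hyp' : ∀ l ∈ S', ∃ m' : ℤ, l < m' ∧ Finset.Ico l m' ⊆ S' ∧
        lam * ((m' : ℝ) - (l : ℝ)) ≤ ∑ j ∈ Finset.Ico l m', g j := by
      intro l hl
      have hlS : l ∈ S := (Finset.mem_sdiff.mp hl).1
      have hlI : l ∉ I := (Finset.mem_sdiff.mp hl).2
      have hml : m ≤ l := by
        by_contra hcon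
        exact hlI (Finset.mem_Ico.mpr ⟨S.min'_le l hlS, not_le.mp hcon⟩)
      obtain ⟨m', h1, h2, h3⟩ := hyp l hlS
      refine ⟨m', h1, ?_, h3⟩
      intro k hk
      have hk' := Finset.mem_Ico.mp hk
      refine Finset.mem_sdiff.mpr ⟨h2 hk, fun hkI => ?_⟩
      have hk2 := Finset.mem_Ico.mp hkI
      omega
    have hrec := ih S' hcard' hyp'
    have hIS : I ⊆ S := hIsub
    have hc1 : S'.card = S.card - I.card := Finset.card_sdiff_of_subset hIS
    have hc2 : I.card ≤ S.card := Finset.card_le_card hIS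
    have hcards : S.card = S'.card + I.card := by omega
    have hsums : ∑ j ∈ S', g j + ∑ j ∈ I, g j = ∑ j ∈ S, g j := Finset.sum_sdiff hIS
    have hIcr : (I.card : ℝ) = (m : ℝ) - (l₀ : ℝ) := by
      have h2 : ((m - l₀).toNat : ℤ) = m - l₀ := Int.toNat_of_nonneg (by omega)
      have h3 : (((m - l₀).toNat : ℤ) : ℝ) = (m : ℝ) - (l₀ : ℝ) := by rw [h2]; push_cast; ring
      rw [hI, Int.card_Ico]
      exact_mod_cast h3
    calc lam * (S.card : ℝ) = lam * (S'.card : ℝ) + lam * ((m : ℝ) - (l₀ : ℝ)) := by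
          rw [hcards, ← hIcr]; push_cast; ring
      _ ≤ ∑ j ∈ S', g j + ∑ j ∈ I, g j := add_le_add hrec hsum
      _ = ∑ j ∈ S, g j := hsums

private lemma exists_min_witness (g : ℤ → ℝ) (lam : ℝ) {l : ℤ}
    (hl : ∃ m : ℤ, l < m ∧ lam * ((m : ℝ) - (l : ℝ)) ≤ ∑ j ∈ Finset.Ico l m, g j) :
    ∃ m : ℤ, l < m ∧
      (∀ p : ℤ, l < p → p < m →
        ∃ m' : ℤ, p < m' ∧ lam * ((m' : ℝ) - (p : ℝ)) ≤ ∑ j ∈ Finset.Ico p m', g j) ∧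
      lam * ((m : ℝ) - (l : ℝ)) ≤ ∑ j ∈ Finset.Ico l m, g j := by
  classical
  obtain ⟨m, hlm, hsum⟩ := hl
  set P : ℕ → Prop := fun k => lam * ((k : ℝ) + 1) ≤ ∑ j ∈ Finset.Ico l (l + (k : ℤ) + 1), g j
    with hP
  have hex : ∃ k, P k := by
    refine ⟨(m - l - 1).toNat, ?_⟩
    have h1 : l + ((m - l - 1).toNat : ℤ) + 1 = m := by omega
    have h3 : ((m - l - 1).toNat : ℤ) = m - l - 1 := by omega
    have h2 : (((m - l - 1).toNat : ℕ) : ℝ) + 1 = (m : ℝ) - (l : ℝ) := by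
      have h4 := congrArg (Int.cast : ℤ → ℝ) h3
      push_cast at h4
      linarith
    show lam * ((((m - l - 1).toNat : ℕ) : ℝ) + 1) ≤ _
    rw [h1, h2]
    exact hsum
  set k₀ := Nat.find hex with hk₀
  have hPk₀ : P k₀ := Nat.find_spec hex
  refine ⟨l + (k₀ : ℤ) + 1, by omega, ?_, ?_⟩
  · intro p hlp hpm
    set j : ℕ := (p - l - 1).toNat with hj
    have hjk : j < k₀ := by omega
    have hnP : ¬ P j := Nat.find_min hex hjk
    have hpj : l + (j : ℤ) + 1 = p := by omega
    simp only [hP] at hnP hPk₀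
    have hnP' : ∑ x ∈ Finset.Ico l p, g x < lam * ((j : ℝ) + 1) := by
      rw [← hpj]
      exact not_le.mp hnP
    refine ⟨l + (k₀ : ℤ) + 1, by omega, ?_⟩
    have hsplit : ∑ x ∈ Finset.Ico l p, g x + ∑ x ∈ Finset.Ico p (l + (k₀ : ℤ) + 1), g x
        = ∑ x ∈ Finset.Ico l (l + (k₀ : ℤ) + 1), g x :=
      Ico_split g l p (l + (k₀ : ℤ) + 1) (by omega) (by omega)
    have hc1 : ((l + (k₀ : ℤ) + 1 : ℤ) : ℝ) = (l : ℝ) + (k₀ : ℝ) + 1 := by push_cast; ring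
    have hc2 : ((p : ℤ) : ℝ) = (l : ℝ) + (j : ℝ) + 1 := by
      rw [← hpj]; push_cast; ring
    calc lam * (((l + (k₀ : ℤ) + 1 : ℤ) : ℝ) - (p : ℝ))
        = lam * ((k₀ : ℝ) + 1) - lam * ((j : ℝ) + 1) := by rw [hc1, hc2]; ring
      _ ≤ ∑ x ∈ Finset.Ico p (l + (k₀ : ℤ) + 1), g x := by linarith
  · simp only [hP] at hPk₀
    have hc1 : ((l + (k₀ : ℤ) + 1 : ℤ) : ℝ) - (l : ℝ) = (k₀ : ℝ) + 1 := by push_cast; ring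
    rw [hc1]
    exact hPk₀

private lemma maxOS_weak_main (f : ℤ → ℝ) (hf : Integrable f (Measure.count : Measure ℤ))
    (lam : ℝ) (hlam : 0 < lam) :
    ENNReal.ofReal lam *
        (Measure.count : Measure ℤ) {l : ℤ | ENNReal.ofReal lam ≤ maxOS shiftZ f l} ≤
      eLpNorm f 1 (Measure.count : Measure ℤ) := by
  classical
  have hsum : Summable (fun x : ℤ => |f x|) := by
    simpa [Real.norm_eq_abs] using integrable_count_iff.mp hf
  set g : ℤ → ℝ := fun x => |f x| with hgdef
  have hg0 : ∀ x, 0 ≤ g x := fun x => abs_nonneg _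
  set A : ℝ := ∑' x, g x with hA
  have hA0 : 0 ≤ A := tsum_nonneg hg0
  have hfin_sum : ∀ s : Finset ℤ, ∑ j ∈ s, g j ≤ A :=
    fun s => hsum.sum_le_tsum s (fun i _ => hg0 i)
  set E : Set ℤ :=
    {l : ℤ | ∃ m : ℤ, l < m ∧ lam * ((m : ℝ) - (l : ℝ)) ≤ ∑ j ∈ Finset.Ico l m, g j} with hEdef
  set S : Set ℤ := {l : ℤ | ENNReal.ofReal lam ≤ maxOS shiftZ f l} with hSdef
  -- Step A : S ⊆ E
  have hSE : S ⊆ E := by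
    intro l hl
    simp only [hSdef, Set.mem_setOf_eq, maxOS, shiftZ_pow_apply] at hl
    set u : ℕ → ℝ := fun N => (∑ n ∈ Finset.range (N+1), g (l + n)) / ((N : ℝ) + 1) with hu
    have hNpos : ∀ N : ℕ, (0:ℝ) < (N : ℝ) + 1 := fun N => by positivity
    have hnum_le : ∀ N : ℕ, ∑ n ∈ Finset.range (N+1), g (l + n) ≤ A := by
      intro N
      rw [sum_shift_eq g l (N+1)]
      exact hfin_sum _
    have hu_le : ∀ N, u N ≤ A / ((N : ℝ) + 1) := by
      intro N
      have hx : u N = (∑ n ∈ Finset.range (N+1), g (l + n)) / ((N : ℝ) + 1) := rfl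
      rw [hx]
      gcongr
      exact hnum_le N
    have hl' : ENNReal.ofReal lam ≤ ⨆ N, ENNReal.ofReal (u N) := by
      refine le_trans hl (iSup_mono ?_)
      intro N
      rw [← enorm_eq_nnnorm, Real.enorm_eq_ofReal_abs]
      apply ENNReal.ofReal_le_ofReal
      rw [abs_div, abs_of_pos (hNpos N)]
      have hx : u N = (∑ n ∈ Finset.range (N+1), g (l + n)) / ((N : ℝ) + 1) := rfl
      rw [hx]
      gcongr
      refine le_trans (Finset.abs_sum_le_sum_abs _ _) (le_of_eq ?_)
      simp only [hgdef]
    have hex : ∃ N, lam ≤ u N := by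
      by_contra hcon
      push_neg at hcon
      obtain ⟨N₁, hN₁⟩ := exists_nat_gt (A / (lam/2))
      have htail : ∀ N : ℕ, N₁ ≤ N → u N ≤ lam/2 := by
        intro N hN
        have h0 : A / (lam/2) < (N : ℝ) + 1 := by
          have hNle : (N₁ : ℝ) ≤ (N : ℝ) := by exact_mod_cast hN
          linarith
        have h1 : A < ((N : ℝ) + 1) * (lam/2) := (div_lt_iff₀ (half_pos hlam)).mp h0
        have h2 : A / ((N : ℝ) + 1) < lam/2 := by
          rw [div_lt_iff₀ (hNpos N)]
          linarith [mul_comm ((N : ℝ) + 1) (lam/2)]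
        exact le_of_lt (lt_of_le_of_lt (hu_le N) h2)
      have hne : (Finset.range (N₁+1)).Nonempty := ⟨0, Finset.mem_range.mpr (by omega)⟩
      set c : ℝ := (Finset.range (N₁+1)).sup' hne u with hc
      have hub : ∀ N, u N ≤ max c (lam/2) := by
        intro N
        rcases le_or_gt N N₁ with h | h
        · exact le_max_of_le_left (Finset.le_sup' u (Finset.mem_range.mpr (by omega)))
        · exact le_max_of_le_right (htail N h.le)
      have hclt : max c (lam/2) < lam := by
        apply max_lt ?_ (by linarith)
        rw [hc, Finset.sup'_lt_iff]
        intro N _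
        exact hcon N
      have hle2 : (⨆ N, ENNReal.ofReal (u N)) ≤ ENNReal.ofReal (max c (lam/2)) :=
        iSup_le fun N => ENNReal.ofReal_le_ofReal (hub N)
      have hfinal := lt_of_le_of_lt (le_trans hl' hle2)
        ((ENNReal.ofReal_lt_ofReal_iff hlam).mpr hclt)
      exact lt_irrefl _ hfinal
    obtain ⟨N, hN⟩ := hex
    refine ⟨l + (N : ℤ) + 1, by omega, ?_⟩
    have h1 : lam * ((N : ℝ) + 1) ≤ ∑ n ∈ Finset.range (N+1), g (l + n) :=
      (le_div_iff₀ (hNpos N)).mp hN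
    have h2 : ∑ n ∈ Finset.range (N+1), g (l + n) = ∑ j ∈ Finset.Ico l (l + (N : ℤ) + 1), g j := by
      rw [sum_shift_eq g l (N+1)]
      have h3 : l + ((N+1 : ℕ) : ℤ) = l + (N : ℤ) + 1 := by push_cast; ring
      rw [h3]
    have h4 : ((l + (N : ℤ) + 1 : ℤ) : ℝ) - (l : ℝ) = (N : ℝ) + 1 := by push_cast; ring
    rw [h4, ← h2]
    exact h1
  -- Step B : E is finite
  obtain ⟨K, hK⟩ := exists_nat_gt (A / lam)
  set G : ℤ → ℝ := fun x => ∑ n ∈ Finset.range K, g (x + n) with hGdef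
  have hGsum : Summable G :=
    summable_sum (fun n _ => hsum.comp_injective (add_left_injective (n : ℤ)))
  have hEsubG : E ⊆ {x : ℤ | lam ≤ G x} := by
    rintro l ⟨m, hlm, hs⟩
    have hmA : lam * ((m : ℝ) - (l : ℝ)) ≤ A := le_trans hs (hfin_sum _)
    have hml : (m : ℝ) - (l : ℝ) ≤ A / lam := by
      rw [le_div_iff₀ hlam]
      linarith [mul_comm lam ((m : ℝ) - (l : ℝ))]
    have hmK : m ≤ l + K := by
      have h1 : ((m - l : ℤ) : ℝ) < (K : ℝ) := by push_cast; linarith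
      have h2 : (m - l : ℤ) < (K : ℤ) := by exact_mod_cast h1
      omega
    have h2 : ∑ j ∈ Finset.Ico l m, g j ≤ ∑ j ∈ Finset.Ico l (l + (K : ℤ)), g j :=
      Finset.sum_le_sum_of_subset_of_nonneg (Finset.Ico_subset_Ico le_rfl hmK)
        (fun i _ _ => hg0 i)
    have h3 : lam ≤ lam * ((m : ℝ) - (l : ℝ)) := by
      have hge1 : (1 : ℝ) ≤ (m : ℝ) - (l : ℝ) := by
        have : ((m - l : ℤ) : ℝ) ≥ 1 := by exact_mod_cast (by omega : (1:ℤ) ≤ m - l)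
        push_cast at this
        linarith
      nlinarith
    have h4 : G l = ∑ j ∈ Finset.Ico l (l + (K : ℤ)), g j := sum_shift_eq g l K
    show lam ≤ G l
    rw [h4]
    linarith
  have hEfin : E.Finite := by
    have hev : ∀ᶠ x in Filter.cofinite, G x < lam :=
      hGsum.tendsto_cofinite_zero.eventually_lt_const hlam
    have hfin : {x : ℤ | ¬ G x < lam}.Finite := Filter.eventually_cofinite.mp hev
    exact hfin.subset (fun l hl => not_lt.mpr (hEsubG hl))
  -- Step C : apply the rising sun lemma
  set F : Finset ℤ := hEfin.toFinset with hF
  have hFprop : ∀ l ∈ F, ∃ m : ℤ, l < m ∧ Finset.Ico l m ⊆ F ∧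
      lam * ((m : ℝ) - (l : ℝ)) ≤ ∑ j ∈ Finset.Ico l m, g j := by
    intro l hl
    have hlE : l ∈ E := hEfin.mem_toFinset.mp hl
    obtain ⟨m, hlm, hmid, hs⟩ := exists_min_witness g lam hlE
    refine ⟨m, hlm, ?_, hs⟩
    intro k hk
    have hk' := Finset.mem_Ico.mp hk
    rcases eq_or_lt_of_le hk'.1 with rfl | hlk
    · exact hl
    · exact hEfin.mem_toFinset.mpr (hmid k hlk hk'.2)
  have hcomb : lam * (F.card : ℝ) ≤ ∑ j ∈ F, g j :=
    rising_sun g lam F.card F le_rfl hFprop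
  -- Conclude
  have hSfin : S.Finite := hEfin.subset hSE
  have hsubF : hSfin.toFinset ⊆ F := by
    intro x hx
    exact hEfin.mem_toFinset.mpr (hSE (hSfin.mem_toFinset.mp hx))
  have hR : lam * (hSfin.toFinset.card : ℝ) ≤ A := by
    have h1 : (hSfin.toFinset.card : ℝ) ≤ (F.card : ℝ) := by
      exact_mod_cast Finset.card_le_card hsubF
    have h2 : lam * (F.card : ℝ) ≤ A := le_trans hcomb (hfin_sum F)
    nlinarith
  have hENN : ENNReal.ofReal lam * Measure.count S ≤ ENNReal.ofReal A := by
    rw [Measure.count_apply_finite _ hSfin]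
    rw [show ((hSfin.toFinset.card : ℕ) : ℝ≥0∞) = ENNReal.ofReal ((hSfin.toFinset.card : ℕ) : ℝ)
      from (ENNReal.ofReal_natCast _).symm]
    rw [← ENNReal.ofReal_mul hlam.le]
    exact ENNReal.ofReal_le_ofReal hR
  have hnorm : ENNReal.ofReal A = eLpNorm f 1 (Measure.count : Measure ℤ) := by
    rw [eLpNorm_one_eq_lintegral_enorm, MeasureTheory.lintegral_count, hA,
      ENNReal.ofReal_tsum_of_nonneg hg0 hsum]
    congr 1
    ext x
    rw [Real.enorm_eq_ofReal_abs]
  rw [← hnorm]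
  exact hENN

private lemma maxOS_ne_top (f : ℤ → ℝ) (hf : Integrable f (Measure.count : Measure ℤ))
    (x : ℤ) : maxOS shiftZ f x ≠ ⊤ := by
  have hsum : Summable (fun y : ℤ => |f y|) := by
    simpa [Real.norm_eq_abs] using integrable_count_iff.mp hf
  have hbound : maxOS shiftZ f x ≤ ENNReal.ofReal (∑' y, |f y|) := by
    rw [maxOS]
    apply iSup_le
    intro N
    rw [← enorm_eq_nnnorm, Real.enorm_eq_ofReal_abs]
    apply ENNReal.ofReal_le_ofReal
    have h1 : (0:ℝ) < (N : ℝ) + 1 := by positivity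
    rw [abs_div, abs_of_pos h1]
    have h2 : |∑ n ∈ Finset.range (N + 1), f ((shiftZ ^ n) x)|
        ≤ ∑ n ∈ Finset.range (N+1), |f ((shiftZ ^ n) x)| := Finset.abs_sum_le_sum_abs _ _
    have h3 : ∑ n ∈ Finset.range (N+1), |f ((shiftZ ^ n) x)| ≤ ∑' y, |f y| := by
      simp only [shiftZ_pow_apply]
      rw [sum_shift_eq (fun y => |f y|) x (N+1)]
      exact hsum.sum_le_tsum _ (fun i _ => abs_nonneg _)
    have h4 : |∑ n ∈ Finset.range (N + 1), f ((shiftZ ^ n) x)| / ((N : ℝ) + 1)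
        ≤ |∑ n ∈ Finset.range (N + 1), f ((shiftZ ^ n) x)| :=
      div_le_self (abs_nonneg _) (by norm_num)
    linarith
  intro h
  rw [h] at hbound
  exact absurd (lt_of_le_of_lt hbound ENNReal.ofReal_lt_top) (lt_irrefl ⊤)


/-- Lemma 1 of the paper, first part: the best constant in the weak type (1,1) inequality for
the one-sided maximal operator on the canonical system `X₁ = ℤ` equals `1`; in particular
`λ · #{l : M⁻f(l) ≥ λ} ≤ ‖f‖₁` for every `f ∈ ℓ¹(ℤ)` and every `λ > 0`. -/
theorem oneSided_weak_const_int :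
    weakConst (Measure.count : Measure ℤ) (maxOS shiftZ) = 1 ∧
    ∀ f : ℤ → ℝ, Integrable f (Measure.count : Measure ℤ) → ∀ lam : ℝ, 0 < lam →
      ENNReal.ofReal lam *
          (Measure.count : Measure ℤ) {l : ℤ | ENNReal.ofReal lam ≤ maxOS shiftZ f l} ≤
        eLpNorm f 1 (Measure.count : Measure ℤ) := by
  classical
  constructor
  · apply le_antisymm
    · apply sInf_le
      intro f hf l
      rw [one_mul]
      rcases eq_or_ne l 0 with rfl | hl0
      · simp
      rcases eq_or_ne l ⊤ with rfl | hltop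
      · have hempty : {x : ℤ | (⊤:ℝ≥0∞) ≤ maxOS shiftZ f x} = ∅ := by
          ext x
          simp only [Set.mem_setOf_eq, Set.mem_empty_iff_false, iff_false, not_le, top_le_iff]
          first
          | exact lt_top_iff_ne_top.mpr (maxOS_ne_top f hf x)
          | exact maxOS_ne_top f hf x
        rw [hempty]
        simp
      · have hlt : 0 < l.toReal := ENNReal.toReal_pos hl0 hltop
        have hmain := maxOS_weak_main f hf l.toReal hlt
        rwa [ENNReal.ofReal_toReal hltop] at hmain
    · apply le_sInf
      intro C hC
      set f₀ : ℤ → ℝ := fun x => if x = 0 then 1 else 0 with hf₀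
      have hf₀i : Integrable f₀ (Measure.count : Measure ℤ) := by
        rw [integrable_count_iff]
        apply summable_of_ne_finset_zero (s := ({0} : Finset ℤ))
        intro x hx
        have hx0 : x ≠ 0 := by simpa using hx
        simp [hf₀, hx0]
      have key := hC f₀ hf₀i 1
      have h0mem : (0:ℤ) ∈ {x : ℤ | (1:ℝ≥0∞) ≤ maxOS shiftZ f₀ x} := by
        show (1:ℝ≥0∞) ≤ maxOS shiftZ f₀ 0
        rw [maxOS]
        refine le_trans (le_of_eq ?_) (le_iSup _ 0)
        simp [shiftZ_pow_apply, hf₀]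
      have hcount : 1 ≤ (Measure.count : Measure ℤ) {x : ℤ | (1:ℝ≥0∞) ≤ maxOS shiftZ f₀ x} := by
        calc (1:ℝ≥0∞) = (Measure.count : Measure ℤ) ({0} : Set ℤ) :=
              (Measure.count_singleton _).symm
          _ ≤ _ := measure_mono (Set.singleton_subset_iff.mpr h0mem)
      have hnorm : eLpNorm f₀ 1 (Measure.count : Measure ℤ) = 1 := by
        rw [eLpNorm_one_eq_lintegral_enorm, MeasureTheory.lintegral_count]
        rw [tsum_eq_single (0:ℤ) (by intro b hb; simp [hf₀, hb])]
        simp [hf₀]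
      rw [hnorm, mul_one, one_mul] at key
      exact le_trans hcount key
  · intro f hf lam hlam
    exact maxOS_weak_main f hf lam hlam


end
end

section
/- For every nontrivial σ-finite ergodic system X, the best constant in the weak type (1,1) inequality for the one-sided ergodic maximal operator equals 1: C⁻(X, 1) = 1 = C⁻(X₁, 1). -/
open MeasureTheory ENNReal Filter

noncomputable section

variable {X : Type*} [MeasurableSpace X]

/-! ### Auxiliary development: Hopf's maximal ergodic lemma and the weak (1,1) bound -/

section HopfAux

variable (T : X → X) (g : X → ℝ) (lam : ℝ)

/-- The `n`-th term `S_{n+1} g - (n+1)λ`. -/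
def hopfT (n : ℕ) (x : X) : ℝ := birkhoffSum T g (n + 1) x - ((n : ℝ) + 1) * lam

/-- Running maximum of `hopfT n` over `n ≤ N`. -/
def hopfM : ℕ → X → ℝ
  | 0 => hopfT T g lam 0
  | (N + 1) => fun x => max (hopfM N x) (hopfT T g lam (N + 1) x)

lemma hopfT_zero (x : X) : hopfT T g lam 0 x = g x - lam := by
  simp [hopfT, birkhoffSum_one']

lemma hopfT_succ (n : ℕ) (x : X) :
    hopfT T g lam (n + 1) x = (g x - lam) + hopfT T g lam n (T x) := by
  simp only [hopfT, birkhoffSum_succ']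
  push_cast
  ring

lemma hopfM_mono (N : ℕ) (x : X) : hopfM T g lam N x ≤ hopfM T g lam (N + 1) x :=
  le_max_left _ _

lemma hopfT_le_hopfM {n N : ℕ} (h : n ≤ N) (x : X) :
    hopfT T g lam n x ≤ hopfM T g lam N x := by
  induction N with
  | zero => obtain rfl : n = 0 := Nat.le_zero.mp h; exact le_rfl
  | succ N ih =>
      rcases Nat.le_succ_iff.mp h with h' | h'
      · exact (ih h').trans (le_max_left _ _)
      · subst h'; exact le_max_right _ _

lemma hopfM_pos_iff (N : ℕ) (x : X) :
    0 < hopfM T g lam N x ↔ ∃ n ≤ N, 0 < hopfT T g lam n x := by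
  constructor
  · intro h
    induction N with
    | zero => exact ⟨0, le_rfl, h⟩
    | succ N ih =>
        rcases lt_max_iff.mp h with h' | h'
        · obtain ⟨n, hn, hn'⟩ := ih h'
          exact ⟨n, hn.trans (Nat.le_succ _), hn'⟩
        · exact ⟨N + 1, le_rfl, h'⟩
  · rintro ⟨n, hn, hn'⟩
    exact hn'.trans_le (hopfT_le_hopfM T g lam hn x)

/-- The key recursion inequality of Hopf's lemma. -/
lemma hopfM_key (N : ℕ) (x : X) :
    hopfM T g lam N x ≤ (g x - lam) + max (hopfM T g lam N (T x)) 0 := by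
  induction N with
  | zero =>
      rw [hopfM, hopfT_zero]
      exact le_add_of_nonneg_right (le_max_right _ _)
  | succ N ih =>
      refine max_le ?_ ?_
      · exact ih.trans (add_le_add_right
          (max_le_max (hopfM_mono T g lam N (T x)) le_rfl) _)
      · rw [hopfT_succ]
        refine add_le_add_right ?_ _
        exact (hopfT_le_hopfM T g lam (le_refl N) (T x)).trans
          ((hopfM_mono T g lam N (T x)).trans (le_max_left _ _))

lemma birkhoffSum_mono_len (hg0 : ∀ x, 0 ≤ g x) {m n : ℕ} (h : m ≤ n) (x : X) :
    birkhoffSum T g m x ≤ birkhoffSum T g n x := by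
  unfold birkhoffSum
  exact Finset.sum_le_sum_of_subset_of_nonneg
    (Finset.range_subset_range.mpr h) (fun i _ _ => hg0 _)

lemma birkhoffSum_nonneg (hg0 : ∀ x, 0 ≤ g x) (n : ℕ) (x : X) :
    0 ≤ birkhoffSum T g n x := by
  unfold birkhoffSum
  exact Finset.sum_nonneg fun i _ => hg0 _

lemma hopfM_le_birkhoffSum (hg0 : ∀ x, 0 ≤ g x) (hlam : 0 < lam) (N : ℕ) (x : X) :
    hopfM T g lam N x ≤ birkhoffSum T g (N + 1) x := by
  induction N with
  | zero =>
      rw [hopfM, hopfT]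
      have : 0 ≤ ((0 : ℕ) : ℝ) + 1 := by norm_num
      nlinarith [hlam]
  | succ N ih =>
      refine max_le (ih.trans (birkhoffSum_mono_len T g hg0 (Nat.le_succ _) x)) ?_
      rw [hopfT]
      have h1 : 0 ≤ (((N : ℝ) + 1) + 1) * lam := by positivity
      push_cast
      linarith

lemma measurable_birkhoffSum (hT : Measurable T) (hg : Measurable g) (n : ℕ) :
    Measurable (birkhoffSum T g n) := by
  unfold birkhoffSum
  exact Finset.measurable_sum _ fun k _ => hg.comp (hT.iterate k)

lemma measurable_hopfM (hT : Measurable T) (hg : Measurable g) (N : ℕ) :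
    Measurable (hopfM T g lam N) := by
  induction N with
  | zero =>
      exact (measurable_birkhoffSum T g hT hg 1).sub measurable_const
  | succ N ih =>
      exact ih.max ((measurable_birkhoffSum T g hT hg (N + 2)).sub measurable_const)

end HopfAux

lemma integrable_comp_mp {μ : Measure X} {T : X → X} (hT : MeasurePreserving T μ μ)
    {g : X → ℝ} (hgi : Integrable g μ) : Integrable (fun x => g (T x)) μ :=
  memLp_one_iff_integrable.mp ((memLp_one_iff_integrable.mpr hgi).comp_measurePreserving hT)

lemma integrable_birkhoffSum {μ : Measure X} {T : X → X} (hT : MeasurePreserving T μ μ)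
    {g : X → ℝ} (hgi : Integrable g μ) (n : ℕ) : Integrable (birkhoffSum T g n) μ := by
  unfold birkhoffSum
  exact integrable_finset_sum _ fun k _ => integrable_comp_mp (hT.iterate k) hgi

/-- Hopf's maximal ergodic inequality, in the form we need. -/
lemma hopf_max_ineq {μ : Measure X} {T : X → X} (hT : MeasurePreserving T μ μ)
    (hTe : MeasurableEmbedding T) {g : X → ℝ} (hg : Measurable g) (hgi : Integrable g μ)
    (hg0 : ∀ x, 0 ≤ g x) {lam : ℝ} (hlam : 0 < lam) :
    μ {x | ∃ n : ℕ, ((n : ℝ) + 1) * lam < birkhoffSum T g (n + 1) x} ≤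
      ENNReal.ofReal ((∫ x, g x ∂μ) / lam) := by
  have hTm : Measurable T := hT.measurable
  set E : ℕ → Set X := fun N => {x | 0 < hopfM T g lam N x} with hE
  have hEmeas : ∀ N, MeasurableSet (E N) :=
    fun N => measurableSet_lt measurable_const (measurable_hopfM T g lam hTm hg N)
  have hSi : ∀ n, Integrable (birkhoffSum T g n) μ := integrable_birkhoffSum hT hgi
  have hEfin : ∀ N, μ (E N) < ∞ := by
    intro N
    refine lt_of_le_of_lt (measure_mono ?_) ((hSi (N + 1)).measure_ge_lt_top hlam)
    intro x hx
    obtain ⟨n, hn, hn'⟩ := (hopfM_pos_iff T g lam N x).mp hx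
    rw [hopfT, sub_pos] at hn'
    have h1 : lam ≤ ((n : ℝ) + 1) * lam := le_mul_of_one_le_left hlam.le (by have := Nat.cast_nonneg (α := ℝ) n; linarith)
    have h2 : birkhoffSum T g (n + 1) x ≤ birkhoffSum T g (N + 1) x :=
      birkhoffSum_mono_len T g hg0 (by omega) x
    exact le_of_lt (lt_of_le_of_lt h1 (hn'.trans_le h2))
  -- the per-N estimate
  have hperN : ∀ N, lam * (μ (E N)).toReal ≤ ∫ x, g x ∂μ := by
    intro N
    set P : X → ℝ := fun x => max (hopfM T g lam N x) 0 with hP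
    have hPmeas : Measurable P := (measurable_hopfM T g lam hTm hg N).max measurable_const
    have hPnn : ∀ x, 0 ≤ P x := fun x => le_max_right _ _
    have hPi : Integrable P μ := by
      refine (hSi (N + 1)).mono' hPmeas.aestronglyMeasurable (ae_of_all _ fun x => ?_)
      rw [Real.norm_eq_abs, abs_of_nonneg (hPnn x)]
      exact max_le (hopfM_le_birkhoffSum T g lam hg0 hlam N x)
        (birkhoffSum_nonneg T g hg0 (N + 1) x)
    have hPTi : Integrable (fun x => P (T x)) μ := integrable_comp_mp hT hPi
    have h1 : ∀ x ∈ E N, P x - P (T x) ≤ g x - lam := by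
      intro x hx
      have hPx : P x = hopfM T g lam N x := max_eq_left (le_of_lt hx)
      have := hopfM_key T g lam N x
      rw [← hPx] at this
      linarith
    have h2 : ∫ x in E N, (P x - P (T x)) ∂μ ≤ ∫ x in E N, (g x - lam) ∂μ :=
      setIntegral_mono_on ((hPi.sub hPTi).integrableOn)
        ((hgi.integrableOn).sub (integrableOn_const (hEfin N).ne)) (hEmeas N) h1
    have h3 : ∫ x in E N, (P x - P (T x)) ∂μ
        = ∫ x in E N, P x ∂μ - ∫ x in E N, P (T x) ∂μ :=
      integral_sub hPi.integrableOn hPTi.integrableOn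
    have h4 : ∫ x in E N, P x ∂μ = ∫ x, P x ∂μ := by
      have hcompl : ∫ x in (E N)ᶜ, P x ∂μ = 0 :=
        setIntegral_eq_zero_of_forall_eq_zero fun x hx => max_eq_right (not_lt.mp hx)
      rw [← integral_add_compl (hEmeas N) hPi, hcompl, add_zero]
    have h5 : ∫ x in E N, P (T x) ∂μ ≤ ∫ x, P (T x) ∂μ :=
      setIntegral_le_integral hPTi (ae_of_all _ fun x => hPnn (T x))
    have h6 : ∫ x, P (T x) ∂μ = ∫ x, P x ∂μ := hT.integral_comp hTe P
    have h7 : ∫ x in E N, (g x - lam) ∂μ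
        = ∫ x in E N, g x ∂μ - lam * (μ (E N)).toReal := by
      rw [integral_sub hgi.integrableOn (integrableOn_const (hEfin N).ne),
        setIntegral_const, smul_eq_mul, mul_comm, Measure.real]
    have h8 : ∫ x in E N, g x ∂μ ≤ ∫ x, g x ∂μ :=
      setIntegral_le_integral hgi (ae_of_all _ hg0)
    have h9 : (0 : ℝ) ≤ ∫ x in E N, (P x - P (T x)) ∂μ := by
      rw [h3]
      have : ∫ x in E N, P (T x) ∂μ ≤ ∫ x in E N, P x ∂μ := by
        rw [h4]; exact h5.trans_eq h6
      linarith
    rw [h7] at h2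
    linarith
  -- pass to the union
  have hEN_le : ∀ N, μ (E N) ≤ ENNReal.ofReal ((∫ x, g x ∂μ) / lam) := by
    intro N
    have h1 : (μ (E N)).toReal ≤ (∫ x, g x ∂μ) / lam := by
      rw [le_div_iff₀ hlam]
      have := hperN N
      linarith
    calc μ (E N) = ENNReal.ofReal (μ (E N)).toReal :=
          (ENNReal.ofReal_toReal (hEfin N).ne).symm
      _ ≤ _ := ENNReal.ofReal_le_ofReal h1
  have hEmono : Monotone E := monotone_nat_of_le_succ fun N x hx =>
    lt_of_lt_of_le hx (hopfM_mono T g lam N x)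
  have hset : {x | ∃ n : ℕ, ((n : ℝ) + 1) * lam < birkhoffSum T g (n + 1) x} = ⋃ N, E N := by
    ext x
    simp only [Set.mem_setOf_eq, Set.mem_iUnion, hE, hopfM_pos_iff, hopfT, sub_pos]
    constructor
    · rintro ⟨n, hn⟩; exact ⟨n, n, le_rfl, hn⟩
    · rintro ⟨N, n, _, hn⟩; exact ⟨n, hn⟩
  rw [hset, hEmono.directed_le.measure_iUnion]
  exact iSup_le hEN_le

lemma maxOS_term_eq {T : Equiv.Perm X} (f : X → ℝ) (N : ℕ) (x : X) :
    (∑ n ∈ Finset.range (N + 1), f ((T ^ n) x)) = birkhoffSum (⇑T) f (N + 1) x := by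
  unfold birkhoffSum
  refine Finset.sum_congr rfl fun n _ => ?_
  rw [Equiv.Perm.iterate_eq_pow]

/-- The weak type (1,1) inequality with constant 1 for the one-sided maximal operator. -/
lemma maxOS_weak_one {μ : Measure X} (T : Equiv.Perm X)
    (hT : MeasurePreserving (⇑T) μ μ) (hTs : Measurable (⇑T.symm))
    {f : X → ℝ} (hf : Integrable f μ) (l : ℝ≥0∞) :
    l * μ {x | l ≤ maxOS T f x} ≤ eLpNorm f 1 μ := by
  have hTm : Measurable ⇑T := hT.measurable
  have hTe : MeasurableEmbedding ⇑T :=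
    (MeasurableEquiv.mk T hTm hTs).measurableEmbedding
  -- measurable representative
  set f' : X → ℝ := hf.1.mk f with hf'def
  have hff' : f =ᵐ[μ] f' := hf.1.ae_eq_mk
  have hf'm : Measurable f' := hf.1.stronglyMeasurable_mk.measurable
  have hf'i : Integrable f' μ := hf.congr hff'
  set g : X → ℝ := fun x => |f' x| with hgdef
  have hg : Measurable g := hf'm.abs
  have hgi : Integrable g μ := hf'i.abs
  have hg0 : ∀ x, 0 ≤ g x := fun x => abs_nonneg _
  -- the invariant null set
  set D : Set X := toMeasurable μ {x | f x ≠ f' x} with hDdef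
  have hD0 : μ D = 0 := by
    rw [measure_toMeasurable]
    exact ae_iff.mp hff'
  set Nstar : Set X := ⋃ n : ℕ, (⇑T)^[n] ⁻¹' D with hNdef
  have hN0 : μ Nstar = 0 := by
    refine measure_iUnion_null fun n => ?_
    rw [(hT.iterate n).measure_preimage (measurableSet_toMeasurable _ _).nullMeasurableSet]
    exact hD0
  have hfx : ∀ x ∉ Nstar, ∀ n : ℕ, f ((T ^ n) x) = f' ((T ^ n) x) := by
    intro x hx n
    have h1 : (⇑T)^[n] x ∉ D := by
      intro h; exact hx (Set.mem_iUnion.mpr ⟨n, h⟩)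
    have h2 : (⇑T)^[n] x ∉ {y | f y ≠ f' y} :=
      fun h => h1 (subset_toMeasurable μ _ h)
    have h3 : f ((⇑T)^[n] x) = f' ((⇑T)^[n] x) := not_not.mp h2
    rwa [Equiv.Perm.iterate_eq_pow] at h3
  -- identify the L¹ norm
  have hL : eLpNorm f 1 μ = ENNReal.ofReal (∫ x, g x ∂μ) := by
    rw [eLpNorm_one_eq_lintegral_enorm]
    have h1 : ∫⁻ x, ‖f x‖ₑ ∂μ = ∫⁻ x, ‖f' x‖ₑ ∂μ := by
      refine lintegral_congr_ae ?_
      filter_upwards [hff'] with x hx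
      simp only [hx]
    have h2 : ENNReal.ofReal (∫ x, ‖f' x‖ ∂μ) = ∫⁻ x, ‖f' x‖ₑ ∂μ :=
      ofReal_integral_norm_eq_lintegral_enorm hf'i
    have h3 : ∫ x, g x ∂μ = ∫ x, ‖f' x‖ ∂μ := by
      simp [hgdef, Real.norm_eq_abs]
    rw [h1, h3, h2]
  have hLfin : eLpNorm f 1 μ ≠ ∞ := by rw [hL]; exact ENNReal.ofReal_ne_top
  set S : Set X := {x | l ≤ maxOS T f x} with hSdef
  rcases eq_or_ne (μ S) 0 with h0 | h0
  · rw [h0, mul_zero]; exact zero_le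
  rw [← ENNReal.le_div_iff_mul_le (Or.inl h0) (Or.inr hLfin)]
  refine ENNReal.le_of_forall_nnreal_lt fun r hr => ?_
  rw [ENNReal.le_div_iff_mul_le (Or.inl h0) (Or.inr hLfin)]
  rcases eq_or_ne r 0 with rfl | hr0
  · simp
  have hrpos : (0 : ℝ) < (r : ℝ) := by positivity
  -- the inclusion into the Hopf set
  have hsub : S ⊆ {x | ∃ n : ℕ, ((n : ℝ) + 1) * (r : ℝ) < birkhoffSum (⇑T) g (n + 1) x}
      ∪ Nstar := by
    intro x hx
    by_cases hxN : x ∈ Nstar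
    · exact Or.inr hxN
    refine Or.inl ?_
    have hlt : (r : ℝ≥0∞) < maxOS T f x := lt_of_lt_of_le hr hx
    rw [maxOS, lt_iSup_iff] at hlt
    obtain ⟨N, hN⟩ := hlt
    rw [ENNReal.coe_lt_coe] at hN
    have hN' : (r : ℝ) < |(∑ n ∈ Finset.range (N + 1), f ((T ^ n) x)) / ((N : ℝ) + 1)| := by
      have := NNReal.coe_lt_coe.mpr hN
      rwa [coe_nnnorm, Real.norm_eq_abs] at this
    have hNpos : (0 : ℝ) < (N : ℝ) + 1 := by positivity
    rw [abs_div, abs_of_pos hNpos, lt_div_iff₀ hNpos] at hN'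
    have hsum_eq : (∑ n ∈ Finset.range (N + 1), f ((T ^ n) x))
        = ∑ n ∈ Finset.range (N + 1), f' ((T ^ n) x) :=
      Finset.sum_congr rfl fun n _ => hfx x hxN n
    have habs : |∑ n ∈ Finset.range (N + 1), f' ((T ^ n) x)|
        ≤ birkhoffSum (⇑T) g (N + 1) x := by
      refine (Finset.abs_sum_le_sum_abs _ _).trans ?_
      unfold birkhoffSum
      refine le_of_eq (Finset.sum_congr rfl fun n _ => ?_)
      rw [Equiv.Perm.iterate_eq_pow]
    refine ⟨N, ?_⟩
    calc ((N : ℝ) + 1) * (r : ℝ) = (r : ℝ) * ((N : ℝ) + 1) := mul_comm _ _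
      _ < |∑ n ∈ Finset.range (N + 1), f ((T ^ n) x)| := hN'
      _ = |∑ n ∈ Finset.range (N + 1), f' ((T ^ n) x)| := by rw [hsum_eq]
      _ ≤ _ := habs
  have hμS : μ S ≤ ENNReal.ofReal ((∫ x, g x ∂μ) / (r : ℝ)) := by
    calc μ S ≤ μ ({x | ∃ n : ℕ, ((n : ℝ) + 1) * (r : ℝ) < birkhoffSum (⇑T) g (n + 1) x}
          ∪ Nstar) := measure_mono hsub
      _ ≤ μ {x | ∃ n : ℕ, ((n : ℝ) + 1) * (r : ℝ) < birkhoffSum (⇑T) g (n + 1) x}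
          + μ Nstar := measure_union_le _ _
      _ = μ {x | ∃ n : ℕ, ((n : ℝ) + 1) * (r : ℝ) < birkhoffSum (⇑T) g (n + 1) x} := by
          rw [hN0, add_zero]
      _ ≤ _ := hopf_max_ineq hT hTe hg hgi hg0 hrpos
  calc (r : ℝ≥0∞) * μ S ≤ (r : ℝ≥0∞) * ENNReal.ofReal ((∫ x, g x ∂μ) / (r : ℝ)) :=
        mul_le_mul_right hμS _
    _ = ENNReal.ofReal ((r : ℝ) * ((∫ x, g x ∂μ) / (r : ℝ))) := by
        rw [ENNReal.ofReal_mul hrpos.le, ENNReal.ofReal_coe_nnreal]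
    _ = ENNReal.ofReal (∫ x, g x ∂μ) := by
        rw [mul_div_cancel₀ _ (ne_of_gt hrpos)]
    _ = eLpNorm f 1 μ := hL.symm

/-- The weak type (1,1) best constant of the one-sided maximal operator is 1,
for any nontrivial system. -/
lemma weakConst_maxOS_eq_one {μ : Measure X} (hX : NontrivialSpace μ) (T : Equiv.Perm X)
    (hT : MeasurePreserving (⇑T) μ μ) (hTs : Measurable (⇑T.symm)) :
    weakConst μ (maxOS T) = 1 := by
  refine le_antisymm ?_ ?_
  · -- weakConst ≤ 1 : 1 belongs to the defining set
    refine sInf_le ?_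
    intro f hf l
    rw [one_mul]
    exact maxOS_weak_one T hT hTs hf l
  · -- 1 ≤ weakConst
    refine le_sInf fun C hC => ?_
    obtain ⟨E, hEm, hE0, hEfin⟩ := hX
    set f : X → ℝ := E.indicator fun _ => (1 : ℝ) with hfdef
    have hfi : Integrable f μ :=
      (integrableOn_const hEfin.ne).integrable_indicator hEm
    have hnorm : eLpNorm f 1 μ = μ E := by
      rw [hfdef, eLpNorm_indicator_const hEm one_ne_zero ENNReal.one_ne_top]
      simp
    have hsub : E ⊆ {x | 1 ≤ maxOS T f x} := by
      intro x hx
      have hterm : (1 : ℝ≥0∞) ≤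
          (‖(∑ n ∈ Finset.range (0 + 1), f ((T ^ n) x)) / ((0 : ℕ) + 1 : ℝ)‖₊ : ℝ≥0∞) := by
        have h1 : (∑ n ∈ Finset.range (0 + 1), f ((T ^ n) x)) = f x := by
          simp
        rw [h1]
        have h2 : f x = 1 := Set.indicator_of_mem hx _
        rw [h2]
        norm_num
      exact le_trans hterm (le_iSup (fun N => (‖(∑ n ∈ Finset.range (N + 1),
        f ((T ^ n) x)) / ((N : ℝ) + 1)‖₊ : ℝ≥0∞)) 0)
    have h1 := hC f hfi 1
    rw [one_mul, hnorm] at h1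
    have h2 : μ E ≤ C * μ E := le_trans (measure_mono hsub) h1
    by_contra h
    push_neg at h
    have h3 : C * μ E < 1 * μ E :=
      ENNReal.mul_lt_mul_left hE0.ne' hEfin.ne h
    rw [one_mul] at h3
    exact absurd (h2.trans_lt h3) (lt_irrefl _)

lemma sigmaFinite_count_int : SigmaFinite (Measure.count : Measure ℤ) := by
  refine ⟨⟨⟨fun n => {(Denumerable.ofNat ℤ n)}, fun _ => trivial, fun n => ?_, ?_⟩⟩⟩
  · rw [Measure.count_singleton]
    exact ENNReal.one_lt_top
  · refine Set.eq_univ_of_forall fun z => Set.mem_iUnion.mpr ⟨Encodable.encode z, ?_⟩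
    exact Set.mem_singleton_iff.mpr (Denumerable.ofNat_encode z).symm

lemma measurePreserving_shiftZ :
    MeasurePreserving (⇑shiftZ) (Measure.count : Measure ℤ) Measure.count := by
  refine ⟨Measurable.of_discrete, ?_⟩
  ext s hs
  rw [Measure.map_apply Measurable.of_discrete hs]
  have h1 : ⇑shiftZ ⁻¹' s = (fun z : ℤ => z - 1) '' s := by
    ext z
    simp only [Set.mem_preimage, Set.mem_image, shiftZ, Equiv.coe_addRight]
    constructor
    · intro h; exact ⟨z + 1, h, by ring⟩
    · rintro ⟨w, hw, rfl⟩; simpa using hw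
  rw [h1]
  exact Measure.count_injective_image (fun a b h => by simpa using h) s

/-- For every nontrivial σ-finite ergodic system, the best constant in the weak type (1,1)
inequality for the one-sided ergodic maximal operator equals `1 = C⁻(X₁, 1)`. -/
theorem oneSided_weak_const_ergodic {X : Type*} [MeasurableSpace X] (μ : Measure X)
    [SigmaFinite μ] (hX : NontrivialSpace μ) (T : Equiv.Perm X)
    (hT : MeasurePreserving (⇑T) μ μ) (hTs : Measurable (⇑T.symm))
    (hE : IsErgodicPerm μ T) :
    weakConst μ (maxOS T) = 1 ∧
    weakConst (Measure.count : Measure ℤ) (maxOS shiftZ) = 1 := by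
  constructor
  · exact weakConst_maxOS_eq_one hX T hT hTs
  · exact weakConst_maxOS_eq_one
      ⟨{0}, measurableSet_singleton 0, by simp [Measure.count_singleton], by
        simp [Measure.count_singleton]⟩
      shiftZ measurePreserving_shiftZ Measurable.of_discrete

end
end
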